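/- arXiv:2102.07491 — 8 statements merged into one kernel-verified Lean document; each statement's English description precedes it below -/
import Mathlib

section
/- Existence of a hedonic equilibrium (Theorem 2(i)): there exist a price vector p : Z → ℝ and functions μˢ : X → Z → ℝ, μᵈ : Z → Y → ℝ such that (p, μˢ, μᵈ) is a hedonic equilibrium. -/
open Finset MeasureTheory Real

variable {X Y Z : Type*} [Fintype X] [Fintype Y] [Fintype Z]
  [Nonempty X] [Nonempty Y] [Nonempty Z]

/-- A pair of supply/demand functions is a feasible flow. -/
def FeasibleFlow (n : X → ℝ) (m : Y → ℝ) (μs : X → Z → ℝ) (μd : Z → Y → ℝ) : Prop :=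
  (∀ x z, 0 ≤ μs x z) ∧ (∀ z y, 0 ≤ μd z y) ∧
    (∀ x, ∑ z, μs x z ≤ n x) ∧ (∀ y, ∑ z, μd z y ≤ m y) ∧
    (∀ z, ∑ x, μs x z = ∑ y, μd z y)

/-- Indirect utility of a producer of type `x` facing prices `p`. -/
noncomputable def indirectU (α : X → Z → ℝ) (p : Z → ℝ) (x : X) : ℝ :=
  max (univ.sup' univ_nonempty fun z => α x z + p z) 0

/-- Indirect utility of a consumer of type `y` facing prices `p`. -/
noncomputable def indirectV (γ : Z → Y → ℝ) (p : Z → ℝ) (y : Y) : ℝ :=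
  max (univ.sup' univ_nonempty fun z => γ z y - p z) 0

/-- A triple `(p, μs, μd)` is a hedonic equilibrium. -/
def HedonicEquilibrium (n : X → ℝ) (m : Y → ℝ) (α : X → Z → ℝ) (γ : Z → Y → ℝ)
    (p : Z → ℝ) (μs : X → Z → ℝ) (μd : Z → Y → ℝ) : Prop :=
  FeasibleFlow n m μs μd ∧
    (∀ x z, 0 < μs x z → α x z + p z = indirectU α p x) ∧
    (∀ z y, 0 < μd z y → γ z y - p z = indirectV γ p y) ∧
    (∀ x, 0 < indirectU α p x → ∑ z, μs x z = n x) ∧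
    (∀ y, 0 < indirectV γ p y → ∑ z, μd z y = m y)

/-- Primal (social welfare) objective of a flow. -/
def primalObj (α : X → Z → ℝ) (γ : Z → Y → ℝ) (μs : X → Z → ℝ) (μd : Z → Y → ℝ) : ℝ :=
  (∑ x, ∑ z, μs x z * α x z) + ∑ z, ∑ y, μd z y * γ z y

/-- Dual feasibility of surpluses and prices. -/
def DualFeasible (α : X → Z → ℝ) (γ : Z → Y → ℝ) (u : X → ℝ) (v : Y → ℝ) (p : Z → ℝ) : Prop :=
  (∀ x, 0 ≤ u x) ∧ (∀ y, 0 ≤ v y) ∧ (∀ x z, α x z + p z ≤ u x) ∧ (∀ z y, γ z y - p z ≤ v y)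

/-- Dual objective. -/
def dualObj (n : X → ℝ) (m : Y → ℝ) (u : X → ℝ) (v : Y → ℝ) : ℝ :=
  (∑ x, n x * u x) + ∑ y, m y * v y


section PerturbAux
variable {ι : Type*} [Fintype ι] [Nonempty ι]

lemma sup'_linear_perturb (f g : ι → ℝ) (A : Finset ι) (hA : A.Nonempty)
    (hAdef : A = univ.filter fun z => f z = univ.sup' univ_nonempty f) :
    ∃ ε₀ > 0, ∀ ε : ℝ, 0 < ε → ε ≤ ε₀ →
      (univ.sup' univ_nonempty fun z => f z + ε * g z)
        = univ.sup' univ_nonempty f + ε * A.sup' hA g := by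
  classical
  set s : ℝ := univ.sup' univ_nonempty f with hs
  set G : ℝ := A.sup' hA g with hG
  set Bf : Finset ι := univ.filter fun z => f z ≠ s with hBf
  set ε₀ : ℝ := if h : Bf.Nonempty then Bf.inf' h (fun z => (s - f z) / (1 + |g z - G|)) else 1
    with hε₀
  have hfz_le : ∀ z, f z ≤ s := fun z => Finset.le_sup' f (mem_univ z)
  have hε₀pos : 0 < ε₀ := by
    rw [hε₀]
    split_ifs with h
    · rw [Finset.lt_inf'_iff]
      intro z hz
      have hzs : f z ≠ s := by simpa [hBf] using hz
      have h1 : 0 < s - f z := by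
        have := lt_of_le_of_ne (hfz_le z) hzs; linarith
      have h2 : (0:ℝ) < 1 + |g z - G| := by positivity
      positivity
    · norm_num
  refine ⟨ε₀, hε₀pos, fun ε hε hεle => ?_⟩
  apply le_antisymm
  · apply Finset.sup'_le
    intro z _
    by_cases hz : f z = s
    · have hzA : z ∈ A := by rw [hAdef]; simp [hz]
      have : g z ≤ G := Finset.le_sup' g hzA
      have := mul_le_mul_of_nonneg_left this hε.le
      linarith [hz ▸ le_refl (f z)]
    · have hzB : z ∈ Bf := by simp [hBf, hz]
      have hd : 0 < s - f z := by
        have := lt_of_le_of_ne (hfz_le z) hz; linarith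
      have hεz : ε ≤ (s - f z) / (1 + |g z - G|) := by
        refine hεle.trans ?_
        rw [hε₀]
        rw [dif_pos ⟨z, hzB⟩]
        exact Finset.inf'_le _ hzB
      have habs : ε * (g z - G) < s - f z := by
        have h1 : ε * (g z - G) ≤ ε * |g z - G| :=
          mul_le_mul_of_nonneg_left (le_abs_self _) hε.le
        have h2 : ε * |g z - G| ≤ (s - f z) / (1 + |g z - G|) * |g z - G| :=
          mul_le_mul_of_nonneg_right hεz (abs_nonneg _)
        have h3 : (s - f z) / (1 + |g z - G|) * |g z - G| < s - f z := by
          rw [div_mul_eq_mul_div, div_lt_iff₀ (by positivity)]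
          nlinarith [abs_nonneg (g z - G)]
        linarith
      nlinarith
  · obtain ⟨ζ, hζA, hζ⟩ := Finset.exists_mem_eq_sup' hA g
    have hfζ : f ζ = s := by
      have := hAdef ▸ hζA
      simpa using this
    have : f ζ + ε * g ζ ≤ univ.sup' univ_nonempty fun z => f z + ε * g z :=
      Finset.le_sup' (fun z => f z + ε * g z) (mem_univ ζ)
    rw [hfζ, ← hζ] at this
    linarith


lemma indirect_perturb (f g : ι → ℝ) (A : Finset ι) (hA : A.Nonempty)
    (hAdef : A = univ.filter fun z => f z = univ.sup' univ_nonempty f) :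
    ∃ ε₀ > 0, ∀ ε : ℝ, 0 < ε → ε ≤ ε₀ →
      max (univ.sup' univ_nonempty fun z => f z + ε * g z) 0
        = max (univ.sup' univ_nonempty f) 0
          + ε * (if 0 < univ.sup' univ_nonempty f then A.sup' hA g
                 else if univ.sup' univ_nonempty f = 0 then max (A.sup' hA g) 0 else 0) := by
  classical
  obtain ⟨ε₁, hε₁pos, hε₁⟩ := sup'_linear_perturb f g A hA hAdef
  set s : ℝ := univ.sup' univ_nonempty f with hs
  set G : ℝ := A.sup' hA g with hG
  rcases lt_trichotomy s 0 with hneg | hzero | hpos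
  · refine ⟨min ε₁ (-s / (2 * (1 + |G|))), lt_min hε₁pos (div_pos (by linarith) (by positivity)),
      fun ε hε hεle => ?_⟩
    rw [hε₁ ε hε (hεle.trans (min_le_left _ _))]
    have h1 : ε * G ≤ ε * |G| := mul_le_mul_of_nonneg_left (le_abs_self _) hε.le
    have h2 : ε ≤ -s / (2 * (1 + |G|)) := hεle.trans (min_le_right _ _)
    have h3 : ε * |G| ≤ -s / (2 * (1 + |G|)) * |G| := mul_le_mul_of_nonneg_right h2 (abs_nonneg _)
    have h4 : -s / (2 * (1 + |G|)) * |G| < -s := by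
      rw [div_mul_eq_mul_div, div_lt_iff₀ (by positivity)]
      nlinarith [abs_nonneg G]
    have hlt : s + ε * G < 0 := by linarith
    rw [if_neg (by linarith : ¬ 0 < s), if_neg (by linarith : ¬ s = 0)]
    rw [max_eq_right hlt.le, max_eq_right hneg.le]
    ring
  · refine ⟨ε₁, hε₁pos, fun ε hε hεle => ?_⟩
    rw [hε₁ ε hε hεle, hzero, if_neg (lt_irrefl 0), if_pos rfl]
    rcases le_or_gt G 0 with hG0 | hG0
    · have hεG : ε * G ≤ 0 := by nlinarith
      simp [max_eq_right hεG, max_eq_right hG0]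
    · have hεG : 0 ≤ ε * G := by nlinarith
      simp [max_eq_left hεG, max_eq_left hG0.le]
  · refine ⟨min ε₁ (s / (2 * (1 + |G|))), lt_min hε₁pos (by positivity), fun ε hε hεle => ?_⟩
    rw [hε₁ ε hε (hεle.trans (min_le_left _ _))]
    have h1 : ε * (-G) ≤ ε * |G| := mul_le_mul_of_nonneg_left (neg_le_abs _) hε.le
    have h2 : ε ≤ s / (2 * (1 + |G|)) := hεle.trans (min_le_right _ _)
    have h3 : ε * |G| ≤ s / (2 * (1 + |G|)) * |G| := mul_le_mul_of_nonneg_right h2 (abs_nonneg _)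
    have h4 : s / (2 * (1 + |G|)) * |G| < s := by
      rw [div_mul_eq_mul_div, div_lt_iff₀ (by positivity)]
      nlinarith [abs_nonneg G]
    have hgt : 0 < s + ε * G := by nlinarith
    rw [if_pos hpos, max_eq_left hgt.le, max_eq_left hpos.le]


end PerturbAux

set_option linter.unusedSectionVars false

noncomputable def Dfun (n : X → ℝ) (m : Y → ℝ) (α : X → Z → ℝ) (γ : Z → Y → ℝ)
    (p : Z → ℝ) : ℝ :=
  (∑ x, n x * indirectU α p x) + ∑ y, m y * indirectV γ p y

lemma Dfun_continuous (n : X → ℝ) (m : Y → ℝ) (α : X → Z → ℝ) (γ : Z → Y → ℝ) :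
    Continuous fun p : Z → ℝ => Dfun n m α γ p := by
  apply Continuous.add <;> apply continuous_finset_sum <;> intro i _
  · exact continuous_const.mul ((Continuous.finset_sup'_apply univ_nonempty
      (fun z _ => continuous_const.add (continuous_apply z))).max continuous_const)
  · exact continuous_const.mul ((Continuous.finset_sup'_apply univ_nonempty
      (fun z _ => continuous_const.sub (continuous_apply z))).max continuous_const)

lemma exists_Dmin (n : X → ℝ) (m : Y → ℝ) (hn : ∀ x, 0 ≤ n x) (hm : ∀ y, 0 ≤ m y)
    (α : X → Z → ℝ) (γ : Z → Y → ℝ) :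
    ∃ p : Z → ℝ, ∀ p' : Z → ℝ, Dfun n m α γ p ≤ Dfun n m α γ p' := by
  classical
  set l : Z → ℝ := fun z => -(univ.sup' univ_nonempty fun x => α x z) with hl
  set r : Z → ℝ := fun z => univ.sup' univ_nonempty fun y => γ z y with hr
  set lo : Z → ℝ := fun z => min (l z) (r z) with hlo
  set hi : Z → ℝ := fun z => max (l z) (r z) with hhi
  have hlohi : lo ≤ hi := fun z => min_le_max
  have hbox : (Set.Icc lo hi).Nonempty := Set.nonempty_Icc.2 hlohi
  obtain ⟨p₀, hp₀mem, hp₀min⟩ := isCompact_Icc.exists_isMinOn hbox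
    (Dfun_continuous n m α γ).continuousOn
  refine ⟨p₀, fun p => ?_⟩
  set p' : Z → ℝ := fun z => max (lo z) (min (hi z) (p z)) with hp'
  have hp'mem : p' ∈ Set.Icc lo hi := by
    constructor
    · intro z; exact le_max_left _ _
    · intro z; exact max_le (hlohi z) (min_le_left _ _)
  have hU : ∀ x, indirectU α p' x ≤ indirectU α p x := by
    intro x
    apply max_le _ (le_max_right _ _)
    apply Finset.sup'_le
    intro z _
    rcases le_or_gt (p' z) (p z) with hle | hgt
    · exact le_trans (by linarith [Finset.le_sup' (fun z => α x z + p z) (mem_univ z)] :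
        α x z + p' z ≤ univ.sup' univ_nonempty fun z => α x z + p z) (le_max_left _ _)
    · have hp'z : p' z = lo z := by
        rcases max_cases (lo z) (min (hi z) (p z)) with ⟨h1, h2⟩ | ⟨h1, h2⟩
        · exact h1
        · exfalso; have : min (hi z) (p z) ≤ p z := min_le_right _ _
          rw [hp'] at hgt; simp only at hgt; linarith [h1 ▸ hgt]
      have h1 : α x z ≤ univ.sup' univ_nonempty fun x => α x z :=
        Finset.le_sup' (fun x => α x z) (mem_univ x)
      have h2 : lo z ≤ l z := min_le_left _ _
      have : α x z + p' z ≤ 0 := by rw [hp'z]; simp only [hl] at h2 ⊢; linarith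
      exact le_trans this (le_max_right _ _)
  have hV : ∀ y, indirectV γ p' y ≤ indirectV γ p y := by
    intro y
    apply max_le _ (le_max_right _ _)
    apply Finset.sup'_le
    intro z _
    rcases le_or_gt (p z) (p' z) with hle | hgt
    · exact le_trans (by linarith [Finset.le_sup' (fun z => γ z y - p z) (mem_univ z)] :
        γ z y - p' z ≤ univ.sup' univ_nonempty fun z => γ z y - p z) (le_max_left _ _)
    · have hminp : min (hi z) (p z) = hi z := by
        rcases min_cases (hi z) (p z) with ⟨h1, _⟩ | ⟨h1, h2⟩
        · exact h1
        · exfalso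
          have hple : p z ≤ p' z := by
            rw [hp']; simp only; rw [h1]; exact le_max_right _ _
          linarith
      have hp'z : p' z = hi z := by
        rw [hp']; simp only; rw [hminp]; exact max_eq_right (hlohi z)
      have h1 : γ z y ≤ r z := Finset.le_sup' (fun y => γ z y) (mem_univ y)
      have h2 : r z ≤ hi z := le_max_right _ _
      have : γ z y - p' z ≤ 0 := by rw [hp'z]; linarith
      exact le_trans this (le_max_right _ _)
  calc Dfun n m α γ p₀ ≤ Dfun n m α γ p' := hp₀min hp'mem
    _ ≤ Dfun n m α γ p := by
        apply add_le_add <;> apply Finset.sum_le_sum <;> intro i _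
        · exact mul_le_mul_of_nonneg_left (hU i) (hn i)
        · exact mul_le_mul_of_nonneg_left (hV i) (hm i)

def Mset (n : X → ℝ) (m : Y → ℝ) (α : X → Z → ℝ) (γ : Z → Y → ℝ) (p : Z → ℝ) :
    Set ((X → Z → ℝ) × (Z → Y → ℝ)) :=
  {μ | (∀ x z, 0 ≤ μ.1 x z) ∧ (∀ z y, 0 ≤ μ.2 z y) ∧
    (∀ x, ∑ z, μ.1 x z ≤ n x) ∧ (∀ y, ∑ z, μ.2 z y ≤ m y) ∧
    (∀ x z, 0 < μ.1 x z → α x z + p z = indirectU α p x) ∧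
    (∀ z y, 0 < μ.2 z y → γ z y - p z = indirectV γ p y) ∧
    (∀ x, 0 < indirectU α p x → ∑ z, μ.1 x z = n x) ∧
    (∀ y, 0 < indirectV γ p y → ∑ z, μ.2 z y = m y)}

noncomputable def Tmap (X Y Z : Type*) [Fintype X] [Fintype Y] [Fintype Z] :
    ((X → Z → ℝ) × (Z → Y → ℝ)) →ₗ[ℝ] (Z → ℝ) where
  toFun μ := fun z => (∑ x, μ.1 x z) - ∑ y, μ.2 z y
  map_add' μ ν := by
    funext z
    simp only [Prod.fst_add, Prod.snd_add, Pi.add_apply, Finset.sum_add_distrib]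
    ring
  map_smul' c μ := by
    funext z
    simp only [Prod.smul_fst, Prod.smul_snd, Pi.smul_apply, smul_eq_mul, RingHom.id_apply,
      ← Finset.mul_sum]
    ring

lemma Mset_convex (n : X → ℝ) (m : Y → ℝ) (α : X → Z → ℝ) (γ : Z → Y → ℝ) (p : Z → ℝ) :
    Convex ℝ (Mset n m α γ p) := by
  rintro μ ⟨h1, h2, h3, h4, h5, h6, h7, h8⟩ ν ⟨g1, g2, g3, g4, g5, g6, g7, g8⟩ a b ha hb hab
  have hc1 : ∀ x z, (a • μ + b • ν).1 x z = a * μ.1 x z + b * ν.1 x z := by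
    intro x z; simp [Prod.fst_add, Prod.smul_fst]
  have hc2 : ∀ z y, (a • μ + b • ν).2 z y = a * μ.2 z y + b * ν.2 z y := by
    intro z y; simp [Prod.snd_add, Prod.smul_snd]
  have hs1 : ∀ x, ∑ z, (a • μ + b • ν).1 x z = a * (∑ z, μ.1 x z) + b * ∑ z, ν.1 x z := by
    intro x
    rw [Finset.sum_congr rfl fun z _ => hc1 x z, Finset.sum_add_distrib, ← Finset.mul_sum,
      ← Finset.mul_sum]
  have hs2 : ∀ y, ∑ z, (a • μ + b • ν).2 z y = a * (∑ z, μ.2 z y) + b * ∑ z, ν.2 z y := by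
    intro y
    rw [Finset.sum_congr rfl fun z _ => hc2 z y, Finset.sum_add_distrib, ← Finset.mul_sum,
      ← Finset.mul_sum]
  refine ⟨fun x z => ?_, fun z y => ?_, fun x => ?_, fun y => ?_,
    fun x z hpos => ?_, fun z y hpos => ?_, fun x hu => ?_, fun y hv => ?_⟩
  · rw [hc1]; exact add_nonneg (mul_nonneg ha (h1 x z)) (mul_nonneg hb (g1 x z))
  · rw [hc2]; exact add_nonneg (mul_nonneg ha (h2 z y)) (mul_nonneg hb (g2 z y))
  · rw [hs1]; nlinarith [h3 x, g3 x, Finset.sum_nonneg fun z (_ : z ∈ (univ : Finset Z)) => h1 x z,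
      Finset.sum_nonneg fun z (_ : z ∈ (univ : Finset Z)) => g1 x z]
  · rw [hs2]; nlinarith [h4 y, g4 y, Finset.sum_nonneg fun z (_ : z ∈ (univ : Finset Z)) => h2 z y,
      Finset.sum_nonneg fun z (_ : z ∈ (univ : Finset Z)) => g2 z y]
  · rw [hc1] at hpos
    have : 0 < μ.1 x z ∨ 0 < ν.1 x z := by
      by_contra hcon
      push_neg at hcon
      have e1 : μ.1 x z = 0 := le_antisymm hcon.1 (h1 x z)
      have e2 : ν.1 x z = 0 := le_antisymm hcon.2 (g1 x z)
      rw [e1, e2] at hpos; simp at hpos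
    rcases this with h | h
    · exact h5 x z h
    · exact g5 x z h
  · rw [hc2] at hpos
    have : 0 < μ.2 z y ∨ 0 < ν.2 z y := by
      by_contra hcon
      push_neg at hcon
      have e1 : μ.2 z y = 0 := le_antisymm hcon.1 (h2 z y)
      have e2 : ν.2 z y = 0 := le_antisymm hcon.2 (g2 z y)
      rw [e1, e2] at hpos; simp at hpos
    rcases this with h | h
    · exact h6 z y h
    · exact g6 z y h
  · rw [hs1, h7 x hu, g7 x hu, ← add_mul, hab, one_mul]
  · rw [hs2, h8 y hv, g8 y hv, ← add_mul, hab, one_mul]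

lemma Mset_isClosed (n : X → ℝ) (m : Y → ℝ) (α : X → Z → ℝ) (γ : Z → Y → ℝ) (p : Z → ℝ) :
    IsClosed (Mset n m α γ p) := by
  classical
  have cs : ∀ (x : X) (z : Z),
      Continuous fun μ : (X → Z → ℝ) × (Z → Y → ℝ) => μ.1 x z :=
    fun x z => (continuous_apply z).comp ((continuous_apply x).comp continuous_fst)
  have cd : ∀ (z : Z) (y : Y),
      Continuous fun μ : (X → Z → ℝ) × (Z → Y → ℝ) => μ.2 z y :=
    fun z y => (continuous_apply y).comp ((continuous_apply z).comp continuous_snd)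
  have h1 : IsClosed {μ : (X → Z → ℝ) × (Z → Y → ℝ) | ∀ x z, 0 ≤ μ.1 x z} := by
    simp only [Set.setOf_forall]
    exact isClosed_iInter fun x => isClosed_iInter fun z =>
      isClosed_le continuous_const (cs x z)
  have h2 : IsClosed {μ : (X → Z → ℝ) × (Z → Y → ℝ) | ∀ z y, 0 ≤ μ.2 z y} := by
    simp only [Set.setOf_forall]
    exact isClosed_iInter fun z => isClosed_iInter fun y =>
      isClosed_le continuous_const (cd z y)
  have h3 : IsClosed {μ : (X → Z → ℝ) × (Z → Y → ℝ) | ∀ x, ∑ z, μ.1 x z ≤ n x} := by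
    simp only [Set.setOf_forall]
    exact isClosed_iInter fun x =>
      isClosed_le (continuous_finset_sum _ fun z _ => cs x z) continuous_const
  have h4 : IsClosed {μ : (X → Z → ℝ) × (Z → Y → ℝ) | ∀ y, ∑ z, μ.2 z y ≤ m y} := by
    simp only [Set.setOf_forall]
    exact isClosed_iInter fun y =>
      isClosed_le (continuous_finset_sum _ fun z _ => cd z y) continuous_const
  have h5 : IsClosed {μ : (X → Z → ℝ) × (Z → Y → ℝ) |
      ∀ x z, 0 < μ.1 x z → α x z + p z = indirectU α p x} := by
    simp only [Set.setOf_forall]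
    refine isClosed_iInter fun x => isClosed_iInter fun z => ?_
    by_cases hE : α x z + p z = indirectU α p x
    · simp only [hE]
      simp only [implies_true, Set.setOf_true]
      exact isClosed_univ
    · have : {μ : (X → Z → ℝ) × (Z → Y → ℝ) | 0 < μ.1 x z → α x z + p z = indirectU α p x}
          = {μ | μ.1 x z ≤ 0} := by
        ext μ; simp [hE, not_lt]
      rw [this]
      exact isClosed_le (cs x z) continuous_const
  have h6 : IsClosed {μ : (X → Z → ℝ) × (Z → Y → ℝ) |
      ∀ z y, 0 < μ.2 z y → γ z y - p z = indirectV γ p y} := by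
    simp only [Set.setOf_forall]
    refine isClosed_iInter fun z => isClosed_iInter fun y => ?_
    by_cases hE : γ z y - p z = indirectV γ p y
    · simp only [hE]
      simp only [implies_true, Set.setOf_true]
      exact isClosed_univ
    · have : {μ : (X → Z → ℝ) × (Z → Y → ℝ) | 0 < μ.2 z y → γ z y - p z = indirectV γ p y}
          = {μ | μ.2 z y ≤ 0} := by
        ext μ; simp [hE, not_lt]
      rw [this]
      exact isClosed_le (cd z y) continuous_const
  have h7 : IsClosed {μ : (X → Z → ℝ) × (Z → Y → ℝ) |
      ∀ x, 0 < indirectU α p x → ∑ z, μ.1 x z = n x} := by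
    simp only [Set.setOf_forall]
    refine isClosed_iInter fun x => isClosed_iInter fun _ =>
      isClosed_eq (continuous_finset_sum _ fun z _ => cs x z) continuous_const
  have h8 : IsClosed {μ : (X → Z → ℝ) × (Z → Y → ℝ) |
      ∀ y, 0 < indirectV γ p y → ∑ z, μ.2 z y = m y} := by
    simp only [Set.setOf_forall]
    refine isClosed_iInter fun y => isClosed_iInter fun _ =>
      isClosed_eq (continuous_finset_sum _ fun z _ => cd z y) continuous_const
  have : Mset n m α γ p = _ :=
    rfl
  rw [show Mset n m α γ p =
      {μ : (X → Z → ℝ) × (Z → Y → ℝ) | ∀ x z, 0 ≤ μ.1 x z} ∩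
      ({μ | ∀ z y, 0 ≤ μ.2 z y} ∩
      ({μ | ∀ x, ∑ z, μ.1 x z ≤ n x} ∩
      ({μ | ∀ y, ∑ z, μ.2 z y ≤ m y} ∩
      ({μ | ∀ x z, 0 < μ.1 x z → α x z + p z = indirectU α p x} ∩
      ({μ | ∀ z y, 0 < μ.2 z y → γ z y - p z = indirectV γ p y} ∩
      ({μ | ∀ x, 0 < indirectU α p x → ∑ z, μ.1 x z = n x} ∩
      {μ | ∀ y, 0 < indirectV γ p y → ∑ z, μ.2 z y = m y})))))) from rfl]
  exact h1.inter (h2.inter (h3.inter (h4.inter (h5.inter (h6.inter (h7.inter h8))))))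

lemma Mset_isCompact (n : X → ℝ) (m : Y → ℝ) (α : X → Z → ℝ) (γ : Z → Y → ℝ) (p : Z → ℝ) :
    IsCompact (Mset n m α γ p) := by
  have hsub : Mset n m α γ p ⊆
      (Set.Icc (0 : X → Z → ℝ) (fun x _ => n x)) ×ˢ (Set.Icc (0 : Z → Y → ℝ) (fun _ y => m y)) := by
    rintro ⟨μs, μd⟩ ⟨h1, h2, h3, h4, _⟩
    refine ⟨⟨fun x => fun z => h1 x z, fun x => fun z => ?_⟩,
      ⟨fun z => fun y => h2 z y, fun z => fun y => ?_⟩⟩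
    · exact le_trans (Finset.single_le_sum (fun z _ => h1 x z) (mem_univ z)) (h3 x)
    · exact le_trans (Finset.single_le_sum (f := fun z' => μd z' y)
        (fun z' _ => h2 z' y) (mem_univ z)) (h4 y)
  exact (isCompact_Icc.prod isCompact_Icc).of_isClosed_subset
    (Mset_isClosed n m α γ p) hsub

/-- Theorem 2(i): existence of a hedonic equilibrium. -/
theorem hedonic_equilibrium_exists (n : X → ℝ) (m : Y → ℝ)
    (hn : ∀ x, 0 ≤ n x) (hm : ∀ y, 0 ≤ m y) (α : X → Z → ℝ) (γ : Z → Y → ℝ) :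
    ∃ (p : Z → ℝ) (μs : X → Z → ℝ) (μd : Z → Y → ℝ),
      HedonicEquilibrium n m α γ p μs μd := by
  classical
  obtain ⟨p, hpmin⟩ := exists_Dmin n m hn hm α γ
  refine ⟨p, ?_⟩
  suffices h : ∃ μ ∈ Mset n m α γ p, Tmap X Y Z μ = 0 by
    obtain ⟨⟨μs, μd⟩, ⟨k1, k2, k3, k4, k5, k6, k7, k8⟩, hT⟩ := h
    refine ⟨μs, μd, ⟨⟨k1, k2, k3, k4, fun z => ?_⟩, k5, k6, k7, k8⟩⟩
    have := congrFun hT z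
    simp only [Tmap, LinearMap.coe_mk, AddHom.coe_mk, Pi.zero_apply] at this
    linarith
  by_contra hS
  have h0 : (0 : Z → ℝ) ∉ Tmap X Y Z '' Mset n m α γ p := by
    rintro ⟨μ, hμ, hμ0⟩
    exact hS ⟨μ, hμ, hμ0⟩
  obtain ⟨f, c, c', hfc, hcc', hc'f⟩ := geometric_hahn_banach_compact_closed
    ((Mset_convex n m α γ p).linear_image (Tmap X Y Z))
    ((Mset_isCompact n m α γ p).image (Tmap X Y Z).continuous_of_finiteDimensional)
    (convex_singleton (0 : Z → ℝ)) isClosed_singleton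
    (Set.disjoint_singleton_right.2 h0)
  have hfzero : c' < 0 := by simpa using hc'f 0 rfl
  have hneg : ∀ μ ∈ Mset n m α γ p, f (Tmap X Y Z μ) < 0 := fun μ hμ =>
    lt_trans (hfc _ ⟨μ, hμ, rfl⟩) (lt_trans hcc' hfzero)
  set q : Z → ℝ := fun z => f (Pi.single z 1) with hq
  have hfq : ∀ w : Z → ℝ, f w = ∑ z, w z * q z := by
    intro w
    have hw : (∑ z, Pi.single z (w z)) = w := by
      funext z'
      rw [Finset.sum_apply]
      simp [Pi.single_apply]
    calc f w = f (∑ z, Pi.single z (w z)) := by rw [hw]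
      _ = ∑ z, f (Pi.single z (w z)) := map_sum f _ _
      _ = ∑ z, w z * q z := by
          refine Finset.sum_congr rfl fun z _ => ?_
          have hsingle : Pi.single z (w z) = w z • (Pi.single z 1 : Z → ℝ) := by
            funext z'
            by_cases hz : z' = z <;> simp [Pi.single_apply, hz]
          rw [hsingle, _root_.map_smul, smul_eq_mul, hq]
  -- argmax data
  set us : X → ℝ := fun x => univ.sup' univ_nonempty fun z => α x z + p z with hus
  set vs : Y → ℝ := fun y => univ.sup' univ_nonempty fun z => γ z y - p z with hvs
  set A : X → Finset Z := fun x => univ.filter fun z => α x z + p z = us x with hA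
  set B : Y → Finset Z := fun y => univ.filter fun z => γ z y - p z = vs y with hB
  have hAne : ∀ x, (A x).Nonempty := by
    intro x
    obtain ⟨b, hb, hval⟩ := Finset.exists_mem_eq_sup' univ_nonempty (fun z => α x z + p z)
    exact ⟨b, by simp [hA, hus, hval.symm]⟩
  have hBne : ∀ y, (B y).Nonempty := by
    intro y
    obtain ⟨b, hb, hval⟩ := Finset.exists_mem_eq_sup' univ_nonempty (fun z => γ z y - p z)
    exact ⟨b, by simp [hB, hvs, hval.symm]⟩
  set GA : X → ℝ := fun x => (A x).sup' (hAne x) q with hGA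
  set GB : Y → ℝ := fun y => (B y).sup' (hBne y) (fun z => -q z) with hGB
  set ax : X → ℝ := fun x =>
    if 0 < us x then GA x else if us x = 0 then max (GA x) 0 else 0 with hax
  set by' : Y → ℝ := fun y =>
    if 0 < vs y then GB y else if vs y = 0 then max (GB y) 0 else 0 with hby'
  -- perturbation
  have hpertU : ∀ x, ∃ ε₀ > 0, ∀ ε : ℝ, 0 < ε → ε ≤ ε₀ →
      indirectU α (fun z => p z + ε * q z) x = indirectU α p x + ε * ax x := by
    intro x
    obtain ⟨ε₀, hε₀, hkey⟩ := indirect_perturb (fun z => α x z + p z) q (A x) (hAne x)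
      (by rw [hA])
    refine ⟨ε₀, hε₀, fun ε hε hεle => ?_⟩
    have h1 : indirectU α (fun z => p z + ε * q z) x
        = max (univ.sup' univ_nonempty fun z => (α x z + p z) + ε * q z) 0 := by
      simp only [indirectU]
      congr 1
      exact Finset.sup'_congr _ rfl (fun z _ => by ring)
    rw [h1, hkey ε hε hεle]
    rfl
  have hpertV : ∀ y, ∃ ε₀ > 0, ∀ ε : ℝ, 0 < ε → ε ≤ ε₀ →
      indirectV γ (fun z => p z + ε * q z) y = indirectV γ p y + ε * by' y := by
    intro y
    obtain ⟨ε₀, hε₀, hkey⟩ := indirect_perturb (fun z => γ z y - p z) (fun z => -q z)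
      (B y) (hBne y) (by rw [hB])
    refine ⟨ε₀, hε₀, fun ε hε hεle => ?_⟩
    have h1 : indirectV γ (fun z => p z + ε * q z) y
        = max (univ.sup' univ_nonempty fun z => (γ z y - p z) + ε * (-q z)) 0 := by
      simp only [indirectV]
      congr 1
      exact Finset.sup'_congr _ rfl (fun z _ => by ring)
    rw [h1, hkey ε hε hεle]
    rfl
  choose εx hεxpos hεx using hpertU
  choose εy hεypos hεy using hpertV
  set ε : ℝ := min (univ.inf' univ_nonempty εx) (univ.inf' univ_nonempty εy) with hε
  have hεpos : 0 < ε := lt_min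
    ((Finset.lt_inf'_iff _).2 fun x _ => hεxpos x)
    ((Finset.lt_inf'_iff _).2 fun y _ => hεypos y)
  have hεlex : ∀ x, ε ≤ εx x := fun x =>
    le_trans (min_le_left _ _) (Finset.inf'_le _ (mem_univ x))
  have hεley : ∀ y, ε ≤ εy y := fun y =>
    le_trans (min_le_right _ _) (Finset.inf'_le _ (mem_univ y))
  -- minimality gives the key inequality
  have hsum_nonneg : 0 ≤ (∑ x, n x * ax x) + ∑ y, m y * by' y := by
    have hDle := hpmin (fun z => p z + ε * q z)
    have hDeq : Dfun n m α γ (fun z => p z + ε * q z)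
        = Dfun n m α γ p + ε * ((∑ x, n x * ax x) + ∑ y, m y * by' y) := by
      simp only [Dfun]
      have e1 : ∑ x, n x * indirectU α (fun z => p z + ε * q z) x
          = ∑ x, (n x * indirectU α p x + ε * (n x * ax x)) :=
        Finset.sum_congr rfl fun x _ => by rw [hεx x ε hεpos (hεlex x)]; ring
      have e2 : ∑ y, m y * indirectV γ (fun z => p z + ε * q z) y
          = ∑ y, (m y * indirectV γ p y + ε * (m y * by' y)) :=
        Finset.sum_congr rfl fun y _ => by rw [hεy y ε hεpos (hεley y)]; ring
      rw [e1, e2, Finset.sum_add_distrib, Finset.sum_add_distrib, ← Finset.mul_sum,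
        ← Finset.mul_sum]
      ring
    rw [hDeq] at hDle
    nlinarith
  -- construct the witness flow
  choose ζ hζmem hζval using fun x => Finset.exists_mem_eq_sup' (hAne x) q
  choose η hηmem hηval using fun y => Finset.exists_mem_eq_sup' (hBne y) (fun z => -q z)
  set conds : X → Prop := fun x => 0 < us x ∨ (us x = 0 ∧ 0 ≤ GA x) with hconds
  set condd : Y → Prop := fun y => 0 < vs y ∨ (vs y = 0 ∧ 0 ≤ GB y) with hcondd
  set μbars : X → Z → ℝ := fun x z => if conds x ∧ z = ζ x then n x else 0 with hμbars
  set μbard : Z → Y → ℝ := fun z y => if condd y ∧ z = η y then m y else 0 with hμbard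
  have husx : ∀ x, α x (ζ x) + p (ζ x) = us x := by
    intro x
    have := hζmem x
    rw [hA] at this
    simpa using (Finset.mem_filter.1 this).2
  have hvsy : ∀ y, γ (η y) y - p (η y) = vs y := by
    intro y
    have := hηmem y
    rw [hB] at this
    simpa using (Finset.mem_filter.1 this).2
  have hrowS : ∀ x, ∑ z, μbars x z = if conds x then n x else 0 := by
    intro x
    by_cases h : conds x <;> simp [hμbars, h]
  have hrowD : ∀ y, ∑ z, μbard z y = if condd y then m y else 0 := by
    intro y
    by_cases h : condd y <;> simp [hμbard, h]
  have hrowSq : ∀ x, ∑ z, μbars x z * q z = if conds x then n x * q (ζ x) else 0 := by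
    intro x
    by_cases h : conds x <;> simp [hμbars, h, ite_mul]
  have hrowDq : ∀ y, ∑ z, μbard z y * q z = if condd y then m y * q (η y) else 0 := by
    intro y
    by_cases h : condd y <;> simp [hμbard, h, ite_mul]
  have hUeq : ∀ x, indirectU α p x = max (us x) 0 := fun x => rfl
  have hVeq : ∀ y, indirectV γ p y = max (vs y) 0 := fun y => rfl
  have hmem : (μbars, μbard) ∈ Mset n m α γ p := by
    refine ⟨fun x z => ?_, fun z y => ?_, fun x => ?_, fun y => ?_,
      fun x z hpos => ?_, fun z y hpos => ?_, fun x hu => ?_, fun y hv => ?_⟩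
    · show 0 ≤ μbars x z
      rw [hμbars]; dsimp only; split_ifs; exacts [hn x, le_rfl]
    · show 0 ≤ μbard z y
      rw [hμbard]; dsimp only; split_ifs; exacts [hm y, le_rfl]
    · show (∑ z, μbars x z) ≤ n x
      rw [hrowS]; split_ifs; exacts [le_rfl, hn x]
    · show (∑ z, μbard z y) ≤ m y
      rw [hrowD]; split_ifs; exacts [le_rfl, hm y]
    · have hpos' : 0 < μbars x z := hpos
      have hcz : conds x ∧ z = ζ x := by
        by_contra hc
        rw [hμbars] at hpos'
        simp only [hc, if_false] at hpos'
        exact lt_irrefl 0 hpos'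
      obtain ⟨hc, rfl⟩ := hcz
      have h0us : 0 ≤ us x := by
        rcases hc with h | ⟨h, _⟩
        · exact h.le
        · exact h.ge
      rw [hUeq, max_eq_left h0us, husx x]
    · have hpos' : 0 < μbard z y := hpos
      have hcz : condd y ∧ z = η y := by
        by_contra hc
        rw [hμbard] at hpos'
        simp only [hc, if_false] at hpos'
        exact lt_irrefl 0 hpos'
      obtain ⟨hc, rfl⟩ := hcz
      have h0vs : 0 ≤ vs y := by
        rcases hc with h | ⟨h, _⟩
        · exact h.le
        · exact h.ge
      rw [hVeq, max_eq_left h0vs, hvsy y]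
    · show (∑ z, μbars x z) = n x
      rw [hrowS]
      rw [hUeq] at hu
      have : 0 < us x := by
        rcases max_cases (us x) 0 with ⟨h1, h2⟩ | ⟨h1, h2⟩
        · rw [h1] at hu; exact hu
        · rw [h1] at hu; exact absurd hu (lt_irrefl 0)
      rw [if_pos (Or.inl this)]
    · show (∑ z, μbard z y) = m y
      rw [hrowD]
      rw [hVeq] at hv
      have : 0 < vs y := by
        rcases max_cases (vs y) 0 with ⟨h1, h2⟩ | ⟨h1, h2⟩
        · rw [h1] at hv; exact hv
        · rw [h1] at hv; exact absurd hv (lt_irrefl 0)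
      rw [if_pos (Or.inl this)]
  have hval : f (Tmap X Y Z (μbars, μbard)) = (∑ x, n x * ax x) + ∑ y, m y * by' y := by
    rw [hfq]
    have hT1 : ∀ z, (Tmap X Y Z (μbars, μbard)) z = (∑ x, μbars x z) - ∑ y, μbard z y :=
      fun z => rfl
    have step1 : ∑ z, (Tmap X Y Z (μbars, μbard)) z * q z
        = (∑ x, ∑ z, μbars x z * q z) - ∑ y, ∑ z, μbard z y * q z := by
      simp only [hT1, sub_mul, Finset.sum_sub_distrib, Finset.sum_mul]
      congr 1 <;> rw [Finset.sum_comm]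
    rw [step1]
    have e1 : ∀ x, (if conds x then n x * q (ζ x) else 0) = n x * ax x := by
      intro x
      have hqζ : q (ζ x) = GA x := (hζval x).symm
      rcases lt_trichotomy (us x) 0 with hn1 | hz1 | hp1
      · have hc : ¬ conds x := by
          simp only [hconds]; rintro (h | ⟨h, h'⟩) <;> linarith
        have hax0 : ax x = 0 := by
          simp only [hax]
          rw [if_neg (by linarith : ¬ 0 < us x), if_neg (by linarith : ¬ us x = 0)]
        rw [if_neg hc, hax0, mul_zero]
      · rcases le_or_gt 0 (GA x) with hge | hlt
        · have hc : conds x := Or.inr ⟨hz1, hge⟩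
          have haxv : ax x = GA x := by
            simp only [hax]
            rw [if_neg (by rw [hz1]; exact lt_irrefl 0), if_pos hz1]
            exact max_eq_left hge
          rw [if_pos hc, haxv, hqζ]
        · have hc : ¬ conds x := by
            simp only [hconds]; rintro (h | ⟨h, h'⟩) <;> linarith
          have hax0 : ax x = 0 := by
            simp only [hax]
            rw [if_neg (by rw [hz1]; exact lt_irrefl 0), if_pos hz1]
            exact max_eq_right hlt.le
          rw [if_neg hc, hax0, mul_zero]
      · have hc : conds x := Or.inl hp1
        have haxv : ax x = GA x := by
          simp only [hax]; rw [if_pos hp1]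
        rw [if_pos hc, haxv, hqζ]
    have e2 : ∀ y, -(if condd y then m y * q (η y) else 0) = m y * by' y := by
      intro y
      have hqη : q (η y) = -GB y := by
        have := (hηval y).symm
        linarith [this]
      rcases lt_trichotomy (vs y) 0 with hn1 | hz1 | hp1
      · have hc : ¬ condd y := by
          simp only [hcondd]; rintro (h | ⟨h, h'⟩) <;> linarith
        have hb0 : by' y = 0 := by
          simp only [hby']
          rw [if_neg (by linarith : ¬ 0 < vs y), if_neg (by linarith : ¬ vs y = 0)]
        rw [if_neg hc, hb0, mul_zero, neg_zero]
      · rcases le_or_gt 0 (GB y) with hge | hlt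
        · have hc : condd y := Or.inr ⟨hz1, hge⟩
          have hbv : by' y = GB y := by
            simp only [hby']
            rw [if_neg (by rw [hz1]; exact lt_irrefl 0), if_pos hz1]
            exact max_eq_left hge
          rw [if_pos hc, hbv, hqη]
          ring
        · have hc : ¬ condd y := by
            simp only [hcondd]; rintro (h | ⟨h, h'⟩) <;> linarith
          have hb0 : by' y = 0 := by
            simp only [hby']
            rw [if_neg (by rw [hz1]; exact lt_irrefl 0), if_pos hz1]
            exact max_eq_right hlt.le
          rw [if_neg hc, hb0, mul_zero, neg_zero]
      · have hc : condd y := Or.inl hp1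
        have hbv : by' y = GB y := by
          simp only [hby']; rw [if_pos hp1]
        rw [if_pos hc, hbv, hqη]
        ring
    have f1 : ∑ x, ∑ z, μbars x z * q z = ∑ x, n x * ax x := by
      refine Finset.sum_congr rfl fun x _ => ?_
      rw [hrowSq x, e1 x]
    have f2 : -∑ y, ∑ z, μbard z y * q z = ∑ y, m y * by' y := by
      rw [← Finset.sum_neg_distrib]
      refine Finset.sum_congr rfl fun y _ => ?_
      rw [hrowDq y, e2 y]
    rw [f1, sub_eq_add_neg, f2]
  have := hneg (μbars, μbard) hmem
  rw [hval] at this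
  linarith
end

section
/- First welfare theorem direction of Theorem 2(ii): if (p, μˢ, μᵈ) is a hedonic equilibrium, then (μˢ, μᵈ) maximizes the primal objective ∑_{x,z} μˢ x z · α x z + ∑_{z,y} μᵈ z y · γ z y among all feasible flows. -/
open Finset MeasureTheory Real

variable {X Y Z : Type*} [Fintype X] [Fintype Y] [Fintype Z]
  [Nonempty X] [Nonempty Y] [Nonempty Z]

/-- Theorem 2(ii), first-welfare direction: an equilibrium flow maximizes the primal objective. -/
theorem equilibrium_maximizes_primal (n : X → ℝ) (m : Y → ℝ)
    (hn : ∀ x, 0 ≤ n x) (hm : ∀ y, 0 ≤ m y) (α : X → Z → ℝ) (γ : Z → Y → ℝ)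
    (p : Z → ℝ) (μs : X → Z → ℝ) (μd : Z → Y → ℝ)
    (heq : HedonicEquilibrium n m α γ p μs μd) :
    ∀ (μs' : X → Z → ℝ) (μd' : Z → Y → ℝ), FeasibleFlow n m μs' μd' →
      primalObj α γ μs' μd' ≤ primalObj α γ μs μd := by
  obtain ⟨⟨hs0, hd0, hsn, hdm, hmc⟩, hrs, hrd, hpu, hpv⟩ := heq
  intro μs' μd' ⟨hs0', hd0', hsn', hdm', hmc'⟩
  set u := indirectU α p with hu
  set v := indirectV γ p with hv
  have hu0 : ∀ x, 0 ≤ u x := fun x => le_max_right _ _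
  have hv0 : ∀ y, 0 ≤ v y := fun y => le_max_right _ _
  have hua : ∀ x z, α x z + p z ≤ u x := fun x z =>
    le_trans (Finset.le_sup' (fun z => α x z + p z) (mem_univ z)) (le_max_left _ _)
  have hvg : ∀ z y, γ z y - p z ≤ v y := fun z y =>
    le_trans (Finset.le_sup' (fun z => γ z y - p z) (mem_univ z)) (le_max_left _ _)
  -- key rearrangement for any market-clearing flow
  have key : ∀ (a : X → Z → ℝ) (b : Z → Y → ℝ), (∀ z, ∑ x, a x z = ∑ y, b z y) →
      (∑ x, ∑ z, a x z * (u x - p z)) + ∑ z, ∑ y, b z y * (v y + p z)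
        = (∑ x, (∑ z, a x z) * u x) + ∑ y, (∑ z, b z y) * v y := by
    intro a b hcl
    have hp : ∑ x, ∑ z, a x z * p z = ∑ z, ∑ y, b z y * p z := by
      rw [Finset.sum_comm]
      exact Finset.sum_congr rfl fun z _ => by
        rw [← Finset.sum_mul, hcl z, Finset.sum_mul]
    have hau : ∀ x, ∑ z, a x z * u x = (∑ z, a x z) * u x := fun x =>
      (Finset.sum_mul _ _ _).symm
    have hbv : ∑ z, ∑ y, b z y * v y = ∑ y, (∑ z, b z y) * v y := by
      rw [Finset.sum_comm]
      exact Finset.sum_congr rfl fun y _ => (Finset.sum_mul _ _ _).symm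
    have e1 : (∑ x, ∑ z, a x z * (u x - p z))
        = (∑ x, ∑ z, a x z * u x) - ∑ x, ∑ z, a x z * p z := by
      simp [mul_sub, Finset.sum_sub_distrib]
    have e2 : (∑ z, ∑ y, b z y * (v y + p z))
        = (∑ z, ∑ y, b z y * v y) + ∑ z, ∑ y, b z y * p z := by
      simp [mul_add, Finset.sum_add_distrib]
    rw [e1, e2, hp, hbv]
    have : (∑ x, ∑ z, a x z * u x) = ∑ x, (∑ z, a x z) * u x :=
      Finset.sum_congr rfl fun x _ => hau x
    rw [this]
    ring
  -- weak duality for the candidate flow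
  have hweak : primalObj α γ μs' μd' ≤ (∑ x, n x * u x) + ∑ y, m y * v y := by
    have step1 : primalObj α γ μs' μd'
        ≤ (∑ x, ∑ z, μs' x z * (u x - p z)) + ∑ z, ∑ y, μd' z y * (v y + p z) := by
      unfold primalObj
      exact add_le_add
        (Finset.sum_le_sum fun x _ => Finset.sum_le_sum fun z _ =>
          mul_le_mul_of_nonneg_left (by linarith [hua x z]) (hs0' x z))
        (Finset.sum_le_sum fun z _ => Finset.sum_le_sum fun y _ =>
          mul_le_mul_of_nonneg_left (by linarith [hvg z y]) (hd0' z y))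
    rw [key μs' μd' hmc'] at step1
    refine step1.trans ?_
    exact add_le_add
      (Finset.sum_le_sum fun x _ => mul_le_mul_of_nonneg_right (hsn' x) (hu0 x))
      (Finset.sum_le_sum fun y _ => mul_le_mul_of_nonneg_right (hdm' y) (hv0 y))
  -- equality for the equilibrium flow
  have heqval : primalObj α γ μs μd = (∑ x, n x * u x) + ∑ y, m y * v y := by
    have step1 : primalObj α γ μs μd
        = (∑ x, ∑ z, μs x z * (u x - p z)) + ∑ z, ∑ y, μd z y * (v y + p z) := by
      unfold primalObj
      congr 1
      · refine Finset.sum_congr rfl fun x _ => Finset.sum_congr rfl fun z _ => ?_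
        rcases lt_or_eq_of_le (hs0 x z) with h | h
        · rw [← hrs x z h]; ring
        · rw [← h]; ring
      · refine Finset.sum_congr rfl fun z _ => Finset.sum_congr rfl fun y _ => ?_
        rcases lt_or_eq_of_le (hd0 z y) with h | h
        · rw [← hrd z y h]; ring
        · rw [← h]; ring
    rw [step1, key μs μd hmc]
    congr 1
    · refine Finset.sum_congr rfl fun x _ => ?_
      rcases lt_or_eq_of_le (hu0 x) with h | h
      · rw [hpu x h]
      · rw [← h, mul_zero, mul_zero]
    · refine Finset.sum_congr rfl fun y _ => ?_
      rcases lt_or_eq_of_le (hv0 y) with h | h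
      · rw [hpv y h]
      · rw [← h, mul_zero, mul_zero]
  rw [heqval]
  exact hweak
end

section
/- Dual optimality at equilibrium (Theorem 2(ii), dual part): if (p, μˢ, μᵈ) is a hedonic equilibrium and u x = max(max_z (α x z + p z), 0), v y = max(max_z (γ z y − p z), 0) are the associated indirect utilities, then (u, v, p) is dual feasible and minimizes the dual objective ∑_x n x · u' x + ∑_y m y · v' y among all dual feasible triples (u', v', p'). -/
open Finset MeasureTheory Real

variable {X Y Z : Type*} [Fintype X] [Fintype Y] [Fintype Z]
  [Nonempty X] [Nonempty Y] [Nonempty Z]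

/-- Theorem 2(ii), dual part: the indirect utilities at equilibrium are dual feasible and
minimize the dual objective. -/
theorem equilibrium_dual_optimal (n : X → ℝ) (m : Y → ℝ)
    (hn : ∀ x, 0 ≤ n x) (hm : ∀ y, 0 ≤ m y) (α : X → Z → ℝ) (γ : Z → Y → ℝ)
    (p : Z → ℝ) (μs : X → Z → ℝ) (μd : Z → Y → ℝ)
    (heq : HedonicEquilibrium n m α γ p μs μd) :
    DualFeasible α γ (indirectU α p) (indirectV γ p) p ∧
      ∀ (u' : X → ℝ) (v' : Y → ℝ) (p' : Z → ℝ), DualFeasible α γ u' v' p' →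
        dualObj n m (indirectU α p) (indirectV γ p) ≤ dualObj n m u' v' := by
  obtain ⟨⟨hμs, hμd, hns, hms, hc⟩, hrs, hrd, hfs, hfd⟩ := heq
  set u := indirectU α p with hu
  set v := indirectV γ p with hv
  have hu0 : ∀ x, 0 ≤ u x := fun x => le_max_right _ _
  have hv0 : ∀ y, 0 ≤ v y := fun y => le_max_right _ _
  have hufeas : ∀ x z, α x z + p z ≤ u x := fun x z =>
    le_trans (Finset.le_sup' (fun z => α x z + p z) (Finset.mem_univ z)) (le_max_left _ _)
  have hvfeas : ∀ z y, γ z y - p z ≤ v y := fun z y =>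
    le_trans (Finset.le_sup' (fun z => γ z y - p z) (Finset.mem_univ z)) (le_max_left _ _)
  refine ⟨⟨hu0, hv0, hufeas, hvfeas⟩, ?_⟩
  intro u' v' p' ⟨hu'0, hv'0, hu'f, hv'f⟩
  -- key: dual objective at equilibrium equals primal objective of (μs, μd)
  have hps : ∀ (q : Z → ℝ), ∑ x, ∑ z, μs x z * q z = ∑ z, ∑ y, μd z y * q z := by
    intro q
    rw [Finset.sum_comm]
    refine Finset.sum_congr rfl fun z _ => ?_
    rw [← Finset.sum_mul, ← Finset.sum_mul, hc z]
  have expand : ∀ (q : Z → ℝ),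
      (∑ x, ∑ z, μs x z * (α x z + q z)) + ∑ z, ∑ y, μd z y * (γ z y - q z)
        = primalObj α γ μs μd := by
    intro q
    have h1 : ∑ x, ∑ z, μs x z * (α x z + q z)
        = (∑ x, ∑ z, μs x z * α x z) + ∑ x, ∑ z, μs x z * q z := by
      simp [mul_add, Finset.sum_add_distrib]
    have h2 : ∑ z, ∑ y, μd z y * (γ z y - q z)
        = (∑ z, ∑ y, μd z y * γ z y) - ∑ z, ∑ y, μd z y * q z := by
      simp [mul_sub, Finset.sum_sub_distrib]
    rw [h1, h2, hps q]
    unfold primalObj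
    ring
  -- equality part
  have e1 : ∑ x, n x * u x = ∑ x, ∑ z, μs x z * (α x z + p z) := by
    refine Finset.sum_congr rfl fun x _ => ?_
    have hsum : n x * u x = (∑ z, μs x z) * u x := by
      rcases lt_or_eq_of_le (hu0 x) with h | h
      · rw [hfs x h]
      · rw [← h, mul_zero, mul_zero]
    rw [hsum, Finset.sum_mul]
    refine Finset.sum_congr rfl fun z _ => ?_
    rcases lt_or_eq_of_le (hμs x z) with h | h
    · rw [hrs x z h]
    · rw [← h, zero_mul, zero_mul]
  have e2 : ∑ y, m y * v y = ∑ z, ∑ y, μd z y * (γ z y - p z) := by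
    rw [Finset.sum_comm]
    refine Finset.sum_congr rfl fun y _ => ?_
    have hsum : m y * v y = (∑ z, μd z y) * v y := by
      rcases lt_or_eq_of_le (hv0 y) with h | h
      · rw [hfd y h]
      · rw [← h, mul_zero, mul_zero]
    rw [hsum, Finset.sum_mul]
    refine Finset.sum_congr rfl fun z _ => ?_
    rcases lt_or_eq_of_le (hμd z y) with h | h
    · rw [hrd z y h]
    · rw [← h, zero_mul, zero_mul]
  have heqd : dualObj n m u v = primalObj α γ μs μd := by
    rw [dualObj, e1, e2, expand p]
  -- weak duality part
  have w1 : ∑ x, ∑ z, μs x z * (α x z + p' z) ≤ ∑ x, n x * u' x := by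
    calc ∑ x, ∑ z, μs x z * (α x z + p' z)
        ≤ ∑ x, ∑ z, μs x z * u' x := by
          refine Finset.sum_le_sum fun x _ => Finset.sum_le_sum fun z _ =>
            mul_le_mul_of_nonneg_left (hu'f x z) (hμs x z)
      _ = ∑ x, (∑ z, μs x z) * u' x := by
          simp [Finset.sum_mul]
      _ ≤ ∑ x, n x * u' x := by
          refine Finset.sum_le_sum fun x _ =>
            mul_le_mul_of_nonneg_right (hns x) (hu'0 x)
  have w2 : ∑ z, ∑ y, μd z y * (γ z y - p' z) ≤ ∑ y, m y * v' y := by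
    calc ∑ z, ∑ y, μd z y * (γ z y - p' z)
        ≤ ∑ z, ∑ y, μd z y * v' y := by
          refine Finset.sum_le_sum fun z _ => Finset.sum_le_sum fun y _ =>
            mul_le_mul_of_nonneg_left (hv'f z y) (hμd z y)
      _ = ∑ y, (∑ z, μd z y) * v' y := by
          rw [Finset.sum_comm]; simp [Finset.sum_mul]
      _ ≤ ∑ y, m y * v' y := by
          refine Finset.sum_le_sum fun y _ =>
            mul_le_mul_of_nonneg_right (hms y) (hv'0 y)
  have := expand p'
  rw [heqd, dualObj]
  linarith
end

section
/- Strong duality for the hedonic linear program: there exist a feasible flow (μˢ, μᵈ) maximizing the primal objective and a dual feasible triple (u, v, p) minimizing the dual objective, and the maximal primal objective value equals the minimal dual objective value. -/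
open Finset MeasureTheory Real

variable {X Y Z : Type*} [Fintype X] [Fintype Y] [Fintype Z]
  [Nonempty X] [Nonempty Y] [Nonempty Z]

namespace HedonicAux

variable {E : Type*} [Fintype E]

/-- Dot product on `E → ℝ`. -/
def dot (u w : E → ℝ) : ℝ := ∑ e, u e * w e

lemma dot_comm (u w : E → ℝ) : dot u w = dot w u := by
  simp [dot, mul_comm]

lemma dot_smul_add (t : ℝ) (u v w : E → ℝ) :
    dot (t • u + v) w = t * dot u w + dot v w := by
  simp [dot, Finset.mul_sum, Finset.sum_add_distrib, add_mul, mul_assoc]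

lemma dot_sub_smul (u : E → ℝ) (c : ℝ) (v w : E → ℝ) :
    dot (u - c • v) w = dot u w - c * dot v w := by
  simp [dot, Finset.mul_sum, sub_mul, Finset.sum_sub_distrib, mul_assoc]

lemma dot_zero (w : E → ℝ) : dot 0 w = 0 := by simp [dot]

lemma dot_smul_add_right (t : ℝ) (u v w : E → ℝ) :
    dot w (t • u + v) = t * dot w u + dot w v := by
  rw [dot_comm, dot_smul_add, dot_comm u w, dot_comm v w]

lemma dot_sub_smul_right (u : E → ℝ) (c : ℝ) (v w : E → ℝ) :
    dot w (u - c • v) = dot w u - c * dot w v := by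
  rw [dot_comm, dot_sub_smul, dot_comm u w, dot_comm v w]

/-- Membership in the cone generated by a list of vectors. -/
def InCone : List (E → ℝ) → (E → ℝ) → Prop
  | [], b => b = 0
  | v :: L, b => ∃ t : ℝ, 0 ≤ t ∧ ∃ w, InCone L w ∧ b = t • v + w

lemma inCone_dot_nonneg {L : List (E → ℝ)} {w y : E → ℝ} (h : InCone L w)
    (hy : ∀ u ∈ L, 0 ≤ dot u y) : 0 ≤ dot w y := by
  induction L generalizing w with
  | nil => simp only [InCone] at h; simp [h, dot_zero]
  | cons v L ih =>
    obtain ⟨t, ht, w', hw', rfl⟩ := h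
    rw [dot_smul_add]
    have h1 : 0 ≤ dot v y := hy v (by simp)
    have h2 : 0 ≤ dot w' y := ih hw' fun u hu => hy u (by simp [hu])
    positivity

lemma inCone_map {L : List (E → ℝ)} {f : (E → ℝ) → (E → ℝ)} {w : E → ℝ}
    (hf0 : f 0 = 0) (hfa : ∀ (t : ℝ) (u v : E → ℝ), f (t • u + v) = t • f u + f v)
    (h : InCone (L.map f) w) : ∃ w₀, InCone L w₀ ∧ w = f w₀ := by
  induction L generalizing w with
  | nil => exact ⟨0, by simpa [InCone, hf0] using h⟩
  | cons v L ih =>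
    obtain ⟨t, ht, w', hw', rfl⟩ := h
    obtain ⟨w₀, hw₀, rfl⟩ := ih hw'
    exact ⟨t • v + w₀, ⟨t, ht, w₀, hw₀, rfl⟩, (hfa t v w₀).symm⟩

/-- Farkas' lemma for lists, by induction on the length. -/
theorem farkas_list : ∀ (k : ℕ) (L : List (E → ℝ)), L.length = k → ∀ b : E → ℝ,
    ¬ InCone L b → ∃ y, (∀ u ∈ L, 0 ≤ dot u y) ∧ dot b y < 0 := by
  intro k
  induction k with
  | zero =>
    intro L hL b hb
    rw [List.length_eq_zero_iff] at hL
    subst hL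
    refine ⟨-b, by simp, ?_⟩
    have hb0 : b ≠ 0 := hb
    have hpos : 0 < dot b b := by
      obtain ⟨e, he⟩ := Function.ne_iff.mp hb0
      simp only [Pi.zero_apply] at he
      exact Finset.sum_pos' (fun i _ => mul_self_nonneg _)
        ⟨e, Finset.mem_univ e, mul_self_pos.mpr he⟩
    have hneg : dot b (-b) = - dot b b := by
      simp [dot, mul_neg, Finset.sum_neg_distrib]
    rw [hneg]
    linarith
  | succ k ih =>
    intro L hL b hb
    match L with
    | v :: L' =>
    have hL' : L'.length = k := by simpa using hL
    have hb' : ¬ InCone L' b := by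
      intro h
      exact hb ⟨0, le_refl _, b, h, by simp⟩
    obtain ⟨y0, hy0, hby0⟩ := ih L' hL' b hb'
    by_cases hv : 0 ≤ dot v y0
    · refine ⟨y0, ?_, hby0⟩
      intro u hu
      rcases List.mem_cons.mp hu with rfl | hu
      · exact hv
      · exact hy0 u hu
    · push_neg at hv
      set d := dot v y0 with hd
      set f : (E → ℝ) → (E → ℝ) := fun u => u - (dot u y0 / d) • v with hf
      have hf0 : f 0 = 0 := by simp [hf, dot_zero]
      have hfa : ∀ (t : ℝ) (u w : E → ℝ), f (t • u + w) = t • f u + f w := by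
        intro t u w
        simp only [hf]
        rw [dot_smul_add, add_div, mul_div_assoc]
        module
      have hnb : ¬ InCone (L'.map f) (f b) := by
        intro h
        obtain ⟨w₀, hw₀, hfb⟩ := inCone_map hf0 hfa h
        have hw₀y : 0 ≤ dot w₀ y0 := inCone_dot_nonneg hw₀ hy0
        -- b = λ • v + w₀ with λ = (dot b y0 - dot w₀ y0)/d > 0
        have hlam : 0 ≤ (dot b y0 - dot w₀ y0) / d :=
          le_of_lt (div_pos_of_neg_of_neg (by linarith) hv)
        apply hb
        refine ⟨(dot b y0 - dot w₀ y0) / d, hlam, w₀, hw₀, ?_⟩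
        have : b - (dot b y0 / d) • v = w₀ - (dot w₀ y0 / d) • v := hfb
        rw [sub_div]
        linear_combination (norm := module) this
      obtain ⟨w, hwL, hwb⟩ := ih (L'.map f) (by simpa using hL') (f b) hnb
      refine ⟨w - (dot v w / d) • y0, ?_, ?_⟩
      · intro u hu
        rcases List.mem_cons.mp hu with rfl | hu
        · have hdne : d ≠ 0 := ne_of_lt hv
          rw [dot_sub_smul_right, ← hd, div_mul_cancel₀ _ hdne, sub_self]
        · have := hwL (f u) (List.mem_map_of_mem (f := f) hu)
          rw [dot_sub_smul_right]
          rw [hf] at this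
          rw [dot_sub_smul] at this
          calc (0:ℝ) ≤ dot u w - dot u y0 / d * dot v w := this
            _ = dot u w - dot v w / d * dot u y0 := by ring
      · have := hwb
        rw [hf, dot_sub_smul] at this
        rw [dot_sub_smul_right]
        calc dot b w - dot v w / d * dot b y0
            = dot b w - dot b y0 / d * dot v w := by ring
          _ < 0 := this

end HedonicAux

namespace Farkas2
open HedonicAux
variable {E : Type*} [Fintype E] {ι : Type*} [Fintype ι] [DecidableEq ι]

lemma inCone_of_list (v : ι → E → ℝ) (c : ι → ℝ) (hc : ∀ i, 0 ≤ c i) :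
    ∀ l : List ι, InCone (l.map v) (l.map (fun i => c i • v i)).sum := by
  intro l
  induction l with
  | nil => simp [InCone]
  | cons i l ih => exact ⟨c i, hc i, _, ih, by simp⟩

lemma exists_of_inCone (v : ι → E → ℝ) :
    ∀ (l : List ι), l.Nodup → ∀ b, InCone (l.map v) b →
      ∃ c : ι → ℝ, (∀ i, 0 ≤ c i) ∧ (l.map (fun i => c i • v i)).sum = b := by
  intro l
  induction l with
  | nil =>
    intro _ b hb
    exact ⟨0, fun i => le_refl 0, by simp [InCone] at hb; simp [hb]⟩
  | cons i l ih =>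
    intro hnd b hb
    obtain ⟨t, ht, w, hw, rfl⟩ := hb
    obtain ⟨c, hc, hsum⟩ := ih (List.nodup_cons.mp hnd).2 w hw
    refine ⟨Function.update c i t, ?_, ?_⟩
    · intro j
      rcases eq_or_ne j i with rfl | hj
      · simpa using ht
      · simpa [Function.update_of_ne hj] using hc j
    · have hi : i ∉ l := (List.nodup_cons.mp hnd).1
      have : (l.map fun j => Function.update c i t j • v j) =
          (l.map fun j => c j • v j) := by
        apply List.map_congr_left
        intro j hj
        have hji : j ≠ i := by rintro rfl; exact hi hj
        rw [Function.update_of_ne hji]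
      simp only [List.map_cons, List.sum_cons, this, hsum, Function.update_self]

/-- Farkas' lemma, Fintype version: if `b` is not a nonnegative combination of the `v i`,
then there is a separating vector `y`. -/
theorem farkas (v : ι → E → ℝ) (b : E → ℝ)
    (h : ¬ ∃ c : ι → ℝ, (∀ i, 0 ≤ c i) ∧ ∑ i, c i • v i = b) :
    ∃ y : E → ℝ, (∀ i, 0 ≤ dot (v i) y) ∧ dot b y < 0 := by
  have key : ¬ InCone ((Finset.univ.toList (α := ι)).map v) b := by
    intro hIC
    obtain ⟨c, hc, hsum⟩ := exists_of_inCone v _ (Finset.nodup_toList _) b hIC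
    refine h ⟨c, hc, ?_⟩
    rw [← hsum, ← Finset.sum_map_toList]
  obtain ⟨y, hy, hby⟩ := farkas_list _ _ rfl b key
  exact ⟨y, fun i => hy (v i) (List.mem_map_of_mem (f := v) (Finset.mem_toList.mpr (Finset.mem_univ i))), hby⟩

end Farkas2

section Aux

open HedonicAux Farkas2

variable (n : X → ℝ) (m : Y → ℝ) (α : X → Z → ℝ) (γ : Z → Y → ℝ)

/-- Weak duality. -/
lemma hedonic_weak_duality {μs : X → Z → ℝ} {μd : Z → Y → ℝ} {u : X → ℝ} {v : Y → ℝ} {p : Z → ℝ}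
    (hf : FeasibleFlow n m μs μd) (hd : DualFeasible α γ u v p) :
    primalObj α γ μs μd ≤ dualObj n m u v := by
  obtain ⟨hs0, hd0, hsn, hdm, hcl⟩ := hf
  obtain ⟨hu0, hv0, hup, hvp⟩ := hd
  have step1 : (∑ x, ∑ z, μs x z * α x z) ≤ ∑ x, ∑ z, μs x z * (u x - p z) :=
    Finset.sum_le_sum fun x _ => Finset.sum_le_sum fun z _ =>
      mul_le_mul_of_nonneg_left (by linarith [hup x z]) (hs0 x z)
  have step2 : (∑ z, ∑ y, μd z y * γ z y) ≤ ∑ z, ∑ y, μd z y * (v y + p z) :=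
    Finset.sum_le_sum fun z _ => Finset.sum_le_sum fun y _ =>
      mul_le_mul_of_nonneg_left (by linarith [hvp z y]) (hd0 z y)
  have e1 : (∑ x, ∑ z, μs x z * (u x - p z))
      = (∑ x, (∑ z, μs x z) * u x) - ∑ z, p z * ∑ x, μs x z := by
    have hx : ∀ x, ∑ z, μs x z * (u x - p z)
        = (∑ z, μs x z) * u x - ∑ z, μs x z * p z := by
      intro x
      rw [Finset.sum_mul, ← Finset.sum_sub_distrib]
      exact Finset.sum_congr rfl fun z _ => by ring
    simp only [hx]
    rw [Finset.sum_sub_distrib]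
    congr 1
    rw [Finset.sum_comm]
    refine Finset.sum_congr rfl fun z _ => ?_
    rw [Finset.mul_sum]
    exact Finset.sum_congr rfl fun x _ => mul_comm _ _
  have e2 : (∑ z, ∑ y, μd z y * (v y + p z))
      = (∑ y, (∑ z, μd z y) * v y) + ∑ z, p z * ∑ y, μd z y := by
    have hz : ∀ z, ∑ y, μd z y * (v y + p z)
        = (∑ y, μd z y * v y) + p z * ∑ y, μd z y := by
      intro z
      rw [Finset.mul_sum, ← Finset.sum_add_distrib]
      exact Finset.sum_congr rfl fun y _ => by ring
    simp only [hz]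
    rw [Finset.sum_add_distrib]
    congr 1
    rw [Finset.sum_comm]
    exact Finset.sum_congr rfl fun y _ => (Finset.sum_mul _ _ _).symm
  have hT : (∑ z, p z * ∑ x, μs x z) = ∑ z, p z * ∑ y, μd z y :=
    Finset.sum_congr rfl fun z _ => by rw [hcl z]
  have hA : (∑ x, (∑ z, μs x z) * u x) ≤ ∑ x, n x * u x :=
    Finset.sum_le_sum fun x _ => mul_le_mul_of_nonneg_right (hsn x) (hu0 x)
  have hB : (∑ y, (∑ z, μd z y) * v y) ≤ ∑ y, m y * v y :=
    Finset.sum_le_sum fun y _ => mul_le_mul_of_nonneg_right (hdm y) (hv0 y)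
  calc primalObj α γ μs μd
      ≤ (∑ x, ∑ z, μs x z * (u x - p z)) + ∑ z, ∑ y, μd z y * (v y + p z) :=
        add_le_add step1 step2
    _ = (∑ x, (∑ z, μs x z) * u x) + (∑ y, (∑ z, μd z y) * v y) := by
        rw [e1, e2, hT]; ring
    _ ≤ dualObj n m u v := add_le_add hA hB

/-- The primal optimum is attained. -/
lemma exists_primal_max (hn : ∀ x, 0 ≤ n x) (hm : ∀ y, 0 ≤ m y) :
    ∃ (μs : X → Z → ℝ) (μd : Z → Y → ℝ), FeasibleFlow n m μs μd ∧
      ∀ (μs' : X → Z → ℝ) (μd' : Z → Y → ℝ), FeasibleFlow n m μs' μd' →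
        primalObj α γ μs' μd' ≤ primalObj α γ μs μd := by
  set K : Set ((X → Z → ℝ) × (Z → Y → ℝ)) := {q | FeasibleFlow n m q.1 q.2} with hK
  have hne : K.Nonempty := by
    refine ⟨(0, 0), ?_⟩
    simp only [hK, Set.mem_setOf_eq, FeasibleFlow, Pi.zero_apply, Prod.fst, Prod.snd]
    refine ⟨fun _ _ => le_refl 0, fun _ _ => le_refl 0, ?_, ?_, fun _ => by simp⟩ <;>
      simp [hn, hm]
  have hsub : K ⊆ Set.Icc (0, 0) ((fun x _ => n x), (fun _ y => m y)) := by
    rintro ⟨μs, μd⟩ ⟨hs0, hd0, hsn, hdm, _⟩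
    constructor
    · exact ⟨fun x z => hs0 x z, fun z y => hd0 z y⟩
    · constructor
      · intro x z
        calc μs x z ≤ ∑ z', μs x z' :=
              Finset.single_le_sum (fun z' _ => hs0 x z') (Finset.mem_univ z)
          _ ≤ n x := hsn x
      · intro z y
        calc μd z y ≤ ∑ z', μd z' y :=
              Finset.single_le_sum (fun z' _ => hd0 z' y) (Finset.mem_univ z)
          _ ≤ m y := hdm y
  have hcs : ∀ (x : X) (z : Z), Continuous fun q : (X → Z → ℝ) × (Z → Y → ℝ) => q.1 x z :=
    fun x z => (continuous_apply z).comp ((continuous_apply x).comp continuous_fst)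
  have hcd : ∀ (z : Z) (y : Y), Continuous fun q : (X → Z → ℝ) × (Z → Y → ℝ) => q.2 z y :=
    fun z y => (continuous_apply y).comp ((continuous_apply z).comp continuous_snd)
  have hclosed : IsClosed K := by
    have : K = (⋂ x, ⋂ z, {q : (X → Z → ℝ) × (Z → Y → ℝ) | 0 ≤ q.1 x z}) ∩
        ((⋂ z, ⋂ y, {q : (X → Z → ℝ) × (Z → Y → ℝ) | 0 ≤ q.2 z y}) ∩
        ((⋂ x, {q : (X → Z → ℝ) × (Z → Y → ℝ) | ∑ z, q.1 x z ≤ n x}) ∩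
        ((⋂ y, {q : (X → Z → ℝ) × (Z → Y → ℝ) | ∑ z, q.2 z y ≤ m y}) ∩
        (⋂ z, {q : (X → Z → ℝ) × (Z → Y → ℝ) | ∑ x, q.1 x z = ∑ y, q.2 z y})))) := by
      ext q
      simp [hK, FeasibleFlow, Set.mem_iInter]
    rw [this]
    refine IsClosed.inter ?_ (IsClosed.inter ?_ (IsClosed.inter ?_ (IsClosed.inter ?_ ?_)))
    · exact isClosed_iInter fun x => isClosed_iInter fun z =>
        isClosed_le continuous_const (hcs x z)
    · exact isClosed_iInter fun z => isClosed_iInter fun y =>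
        isClosed_le continuous_const (hcd z y)
    · exact isClosed_iInter fun x =>
        isClosed_le (continuous_finset_sum _ fun z _ => hcs x z) continuous_const
    · exact isClosed_iInter fun y =>
        isClosed_le (continuous_finset_sum _ fun z _ => hcd z y) continuous_const
    · exact isClosed_iInter fun z =>
        isClosed_eq (continuous_finset_sum _ fun x _ => hcs x z)
          (continuous_finset_sum _ fun y _ => hcd z y)
  have hcomp : IsCompact K := IsCompact.of_isClosed_subset isCompact_Icc hclosed hsub
  have hcont : Continuous fun q : (X → Z → ℝ) × (Z → Y → ℝ) => primalObj α γ q.1 q.2 := by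
    refine Continuous.add ?_ ?_
    · exact continuous_finset_sum _ fun x _ => continuous_finset_sum _ fun z _ =>
        (hcs x z).mul continuous_const
    · exact continuous_finset_sum _ fun z _ => continuous_finset_sum _ fun y _ =>
        (hcd z y).mul continuous_const
  obtain ⟨q, hqK, hqmax⟩ := hcomp.exists_isMaxOn hne hcont.continuousOn
  exact ⟨q.1, q.2, hqK, fun μs' μd' hf' => hqmax (Set.mem_setOf_eq ▸ hf' : (μs', μd') ∈ K)⟩

/-- `(indirectU, indirectV, p)` is dual feasible. -/
lemma indirect_dualFeasible (p : Z → ℝ) :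
    DualFeasible α γ (indirectU α p) (indirectV γ p) p := by
  refine ⟨fun x => le_max_right _ _, fun y => le_max_right _ _, ?_, ?_⟩
  · intro x z
    exact le_trans (Finset.le_sup' (fun z => α x z + p z) (Finset.mem_univ z)) (le_max_left _ _)
  · intro z y
    exact le_trans (Finset.le_sup' (fun z => γ z y - p z) (Finset.mem_univ z)) (le_max_left _ _)

/-- Replacing `(u, v)` by the indirect utilities weakly lowers the dual objective. -/
lemma dualObj_indirect_le (hn : ∀ x, 0 ≤ n x) (hm : ∀ y, 0 ≤ m y)
    {u : X → ℝ} {v : Y → ℝ} {p : Z → ℝ} (hd : DualFeasible α γ u v p) :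
    dualObj n m (indirectU α p) (indirectV γ p) ≤ dualObj n m u v := by
  obtain ⟨hu0, hv0, hup, hvp⟩ := hd
  refine add_le_add (Finset.sum_le_sum fun x _ => ?_) (Finset.sum_le_sum fun y _ => ?_)
  · refine mul_le_mul_of_nonneg_left ?_ (hn x)
    exact max_le (Finset.sup'_le _ _ fun z _ => hup x z) (hu0 x)
  · refine mul_le_mul_of_nonneg_left ?_ (hm y)
    exact max_le (Finset.sup'_le _ _ fun z _ => hvp z y) (hv0 y)

/-- The dual optimum is attained. -/
lemma exists_dual_min (hn : ∀ x, 0 ≤ n x) (hm : ∀ y, 0 ≤ m y) :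
    ∃ (u : X → ℝ) (v : Y → ℝ) (p : Z → ℝ), DualFeasible α γ u v p ∧
      ∀ (u' : X → ℝ) (v' : Y → ℝ) (p' : Z → ℝ), DualFeasible α γ u' v' p' →
        dualObj n m u v ≤ dualObj n m u' v' := by
  set L : ℝ := min 0 (Finset.univ.inf' Finset.univ_nonempty fun xz : X × Z => -(α xz.1 xz.2))
    with hL
  set U : ℝ := max 0 (Finset.univ.sup' Finset.univ_nonempty fun zy : Z × Y => γ zy.1 zy.2)
    with hU
  have hLU : L ≤ U := le_trans (min_le_left _ _) (le_max_left _ _)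
  have hLα : ∀ x z, α x z + L ≤ 0 := by
    intro x z
    have : L ≤ -(α x z) :=
      le_trans (min_le_right _ _) (Finset.inf'_le _ (Finset.mem_univ (x, z)))
    linarith
  have hUγ : ∀ z y, γ z y - U ≤ 0 := by
    intro z y
    have : γ z y ≤ U :=
      le_trans (Finset.le_sup' (fun zy : Z × Y => γ zy.1 zy.2) (Finset.mem_univ (z, y)))
        (le_max_right _ _)
    linarith
  set g : (Z → ℝ) → ℝ := fun p => dualObj n m (indirectU α p) (indirectV γ p) with hg
  set clamp : (Z → ℝ) → Z → ℝ := fun p z => max L (min (p z) U) with hclamp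
  have hUc : ∀ (p : Z → ℝ) (x : X), indirectU α (clamp p) x ≤ indirectU α p x := by
    intro p x
    refine max_le (Finset.sup'_le _ _ fun z _ => ?_) (le_max_right _ _)
    by_cases h : clamp p z ≤ p z
    · exact le_trans (by simpa using add_le_add_left h (α x z))
        (le_trans (Finset.le_sup' (fun z => α x z + p z) (Finset.mem_univ z)) (le_max_left _ _))
    · push_neg at h
      have hcl : clamp p z = L := by
        rcases max_choice L (min (p z) U) with h1 | h1
        · exact h1
        · exfalso
          have : clamp p z ≤ p z := by rw [hclamp]; simp only []; rw [h1]; exact min_le_left _ _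
          linarith
      rw [hcl]
      exact le_trans (hLα x z) (le_max_right _ _)
  have hVc : ∀ (p : Z → ℝ) (y : Y), indirectV γ (clamp p) y ≤ indirectV γ p y := by
    intro p y
    refine max_le (Finset.sup'_le _ _ fun z _ => ?_) (le_max_right _ _)
    by_cases h : p z ≤ clamp p z
    · refine le_trans (by linarith [sub_le_sub_left h (γ z y)] : γ z y - clamp p z ≤ γ z y - p z) ?_
      exact le_trans (Finset.le_sup' (fun z => γ z y - p z) (Finset.mem_univ z)) (le_max_left _ _)
    · push_neg at h
      have hcl : clamp p z = U := by
        have h2 : min (p z) U = U := by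
          rcases min_choice (p z) U with h1 | h1
          · exfalso
            have : p z ≤ clamp p z := by
              rw [hclamp]; simp only []; rw [h1]; exact le_max_right _ _
            linarith
          · exact h1
        rw [hclamp]; simp only []; rw [h2]; exact max_eq_right hLU
      rw [hcl]
      exact le_trans (hUγ z y) (le_max_right _ _)
  have hgc : ∀ p, g (clamp p) ≤ g p := by
    intro p
    exact add_le_add
      (Finset.sum_le_sum fun x _ => mul_le_mul_of_nonneg_left (hUc p x) (hn x))
      (Finset.sum_le_sum fun y _ => mul_le_mul_of_nonneg_left (hVc p y) (hm y))
  have hgcont : Continuous g := by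
    refine Continuous.add ?_ ?_
    · refine continuous_finset_sum _ fun x _ => Continuous.mul continuous_const ?_
      exact Continuous.max
        (Continuous.finset_sup'_apply Finset.univ_nonempty fun z _ =>
          continuous_const.add (continuous_apply z)) continuous_const
    · refine continuous_finset_sum _ fun y _ => Continuous.mul continuous_const ?_
      exact Continuous.max
        (Continuous.finset_sup'_apply Finset.univ_nonempty fun z _ =>
          continuous_const.sub (continuous_apply z)) continuous_const
  have hbox : IsCompact (Set.Icc (fun _ : Z => L) (fun _ : Z => U)) := isCompact_Icc
  have hboxne : (Set.Icc (fun _ : Z => L) (fun _ : Z => U)).Nonempty :=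
    ⟨fun _ => L, le_refl _, fun _ => hLU⟩
  obtain ⟨p, hpbox, hpmin⟩ := hbox.exists_isMinOn hboxne hgcont.continuousOn
  refine ⟨indirectU α p, indirectV γ p, p, indirect_dualFeasible α γ p, ?_⟩
  intro u' v' p' hd'
  have h1 : g p ≤ g (clamp p') := by
    refine hpmin ?_
    constructor
    · intro z; exact le_max_left _ _
    · intro z; exact max_le hLU (min_le_right _ _)
  calc dualObj n m (indirectU α p) (indirectV γ p) = g p := rfl
    _ ≤ g (clamp p') := h1
    _ ≤ g p' := hgc p'
    _ ≤ dualObj n m u' v' := dualObj_indirect_le n m α γ hn hm hd'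

end Aux

section LP
namespace LPInst
open HedonicAux
variable [DecidableEq X] [DecidableEq Y] [DecidableEq Z]
  [DecidableEq X] [DecidableEq Y] [DecidableEq Z]

variable (n : X → ℝ) (m : Y → ℝ) (α : X → Z → ℝ) (γ : Z → Y → ℝ) (δ' : ℝ)

def Amat : ((X × Z) ⊕ (Z × Y) ⊕ (X ⊕ Y ⊕ Unit)) → (X ⊕ Y ⊕ Z ⊕ Unit) → ℝ
  | Sum.inl (x, z), e =>
    match e with
    | Sum.inl x' => if x' = x then 1 else 0
    | Sum.inr (Sum.inl _) => 0
    | Sum.inr (Sum.inr (Sum.inl z')) => if z' = z then 1 else 0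
    | Sum.inr (Sum.inr (Sum.inr _)) => -α x z
  | Sum.inr (Sum.inl (z, y)), e =>
    match e with
    | Sum.inl _ => 0
    | Sum.inr (Sum.inl y') => if y' = y then 1 else 0
    | Sum.inr (Sum.inr (Sum.inl z')) => if z' = z then -1 else 0
    | Sum.inr (Sum.inr (Sum.inr _)) => -γ z y
  | Sum.inr (Sum.inr s), e =>
    match s, e with
    | Sum.inl x, Sum.inl x' => if x' = x then 1 else 0
    | Sum.inr (Sum.inl y), Sum.inr (Sum.inl y') => if y' = y then 1 else 0
    | Sum.inr (Sum.inr _), Sum.inr (Sum.inr (Sum.inr _)) => 1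
    | _, _ => 0

def bvec : (X ⊕ Y ⊕ Z ⊕ Unit) → ℝ
  | Sum.inl x => n x
  | Sum.inr (Sum.inl y) => m y
  | Sum.inr (Sum.inr (Sum.inl _)) => 0
  | Sum.inr (Sum.inr (Sum.inr _)) => -δ'

lemma exists_dual_lt (hn : ∀ x, 0 ≤ n x) (hm : ∀ y, 0 ≤ m y)
    (hinf : ∀ (μs : X → Z → ℝ) (μd : Z → Y → ℝ), FeasibleFlow n m μs μd →
      primalObj α γ μs μd < δ') :
    ∃ (u : X → ℝ) (v : Y → ℝ) (p : Z → ℝ), DualFeasible α γ u v p ∧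
      dualObj n m u v < δ' := by
  have hnofeas : ¬ ∃ c : ((X × Z) ⊕ (Z × Y) ⊕ (X ⊕ Y ⊕ Unit)) → ℝ,
      (∀ i, 0 ≤ c i) ∧ ∑ i, c i • Amat α γ i = bvec n m δ' := by
    rintro ⟨c, hc0, hc⟩
    set μs : X → Z → ℝ := fun x z => c (Sum.inl (x, z)) with hμs
    set μd : Z → Y → ℝ := fun z y => c (Sum.inr (Sum.inl (z, y))) with hμd
    -- row x
    have hrowx : ∀ x₀ : X, (∑ z, μs x₀ z) + c (Sum.inr (Sum.inr (Sum.inl x₀))) = n x₀ := by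
      intro x₀
      have h := congrFun hc (Sum.inl x₀)
      rw [Finset.sum_apply] at h
      simpa only [Pi.smul_apply, smul_eq_mul, Amat, bvec, Fintype.sum_sum_type,
        Fintype.sum_prod_type_right, mul_ite, mul_one, mul_zero, Finset.sum_ite_eq,
        Finset.sum_ite_eq', Finset.mem_univ, if_true, Finset.sum_const_zero,
        add_zero, zero_add, Fintype.sum_unique] using h
    -- row y
    have hrowy : ∀ y₀ : Y, (∑ z, μd z y₀) + c (Sum.inr (Sum.inr (Sum.inr (Sum.inl y₀)))) = m y₀ := by
      intro y₀
      have h := congrFun hc (Sum.inr (Sum.inl y₀))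
      rw [Finset.sum_apply] at h
      simpa only [Pi.smul_apply, smul_eq_mul, Amat, bvec, Fintype.sum_sum_type,
        Fintype.sum_prod_type, mul_ite, mul_one, mul_zero, Finset.sum_ite_eq,
        Finset.sum_ite_eq', Finset.mem_univ, if_true, Finset.sum_const_zero,
        add_zero, zero_add, Fintype.sum_unique] using h
    -- row z
    have hrowz : ∀ z₀ : Z, (∑ x, μs x z₀) - (∑ y, μd z₀ y) = 0 := by
      intro z₀
      have h := congrFun hc (Sum.inr (Sum.inr (Sum.inl z₀)))
      rw [Finset.sum_apply] at h
      simp only [Pi.smul_apply, smul_eq_mul] at h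
      have e1 : (∑ i : X × Z, c (Sum.inl i) * Amat α γ (Sum.inl i) (Sum.inr (Sum.inr (Sum.inl z₀))))
          = ∑ x, μs x z₀ := by
        simp only [Pi.smul_apply, smul_eq_mul, Amat, Fintype.sum_prod_type, mul_ite, mul_one,
          mul_zero, Finset.sum_ite_eq, Finset.mem_univ, if_true]
        rfl
      have e2 : (∑ i : Z × Y, c (Sum.inr (Sum.inl i)) * Amat α γ (Sum.inr (Sum.inl i))
            (Sum.inr (Sum.inr (Sum.inl z₀)))) = -∑ y, μd z₀ y := by
        simp only [Pi.smul_apply, smul_eq_mul, Amat, Fintype.sum_prod_type_right, mul_ite,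
          mul_neg, mul_one, mul_zero, Finset.sum_ite_eq, Finset.mem_univ, if_true,
          ← Finset.sum_neg_distrib]
        rfl
      have e3 : (∑ i : X ⊕ Y ⊕ Unit, c (Sum.inr (Sum.inr i)) * Amat α γ (Sum.inr (Sum.inr i))
            (Sum.inr (Sum.inr (Sum.inl z₀)))) = 0 := by
        simp only [Pi.smul_apply, smul_eq_mul, Amat, Fintype.sum_sum_type, mul_zero,
          Finset.sum_const_zero, add_zero, Fintype.sum_unique]
      rw [Fintype.sum_sum_type, Fintype.sum_sum_type, e1] at h
      rw [e2, e3] at h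
      simp only [bvec] at h
      linarith
    -- obj row
    have hobj : (∑ x, ∑ z, μs x z * (-α x z)) + (∑ z, ∑ y, μd z y * (-γ z y))
        + c (Sum.inr (Sum.inr (Sum.inr (Sum.inr ())))) = -δ' := by
      have h := congrFun hc (Sum.inr (Sum.inr (Sum.inr ())))
      rw [Finset.sum_apply] at h
      simpa only [Pi.smul_apply, smul_eq_mul, Amat, bvec, Fintype.sum_sum_type,
        Fintype.sum_prod_type, mul_one, mul_zero, Finset.sum_const_zero,
        add_zero, zero_add, Fintype.sum_unique, add_assoc] using h
    have hff : FeasibleFlow n m μs μd := by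
      refine ⟨fun x z => hc0 _, fun z y => hc0 _, ?_, ?_, ?_⟩
      · intro x
        have := hrowx x
        have h2 := hc0 (Sum.inr (Sum.inr (Sum.inl x)))
        linarith
      · intro y
        have := hrowy y
        have h2 := hc0 (Sum.inr (Sum.inr (Sum.inr (Sum.inl y))))
        linarith
      · intro z
        have := hrowz z
        linarith
    have hge : δ' ≤ primalObj α γ μs μd := by
      have hs := hc0 (Sum.inr (Sum.inr (Sum.inr (Sum.inr ()))))
      have : primalObj α γ μs μd = δ' + c (Sum.inr (Sum.inr (Sum.inr (Sum.inr ())))) := by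
        have h1 : (∑ x, ∑ z, μs x z * (-α x z)) = -(∑ x, ∑ z, μs x z * α x z) := by
          simp [Finset.sum_neg_distrib]
        have h2 : (∑ z, ∑ y, μd z y * (-γ z y)) = -(∑ z, ∑ y, μd z y * γ z y) := by
          simp [Finset.sum_neg_distrib]
        rw [h1, h2] at hobj
        unfold primalObj
        linarith
      linarith
    exact absurd (hinf μs μd hff) (not_lt.mpr hge)
  obtain ⟨y, hy, hby⟩ := Farkas2.farkas _ _ hnofeas
  set a : X → ℝ := fun x => y (Sum.inl x) with ha
  set bb : Y → ℝ := fun y' => y (Sum.inr (Sum.inl y')) with hbb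
  set q : Z → ℝ := fun z => y (Sum.inr (Sum.inr (Sum.inl z))) with hq
  set t : ℝ := y (Sum.inr (Sum.inr (Sum.inr ()))) with ht
  have hdotxz : ∀ (x : X) (z : Z), dot (Amat α γ (Sum.inl (x, z))) y = a x + q z - α x z * t := by
    intro x z
    simp only [dot, Amat, Fintype.sum_sum_type, ite_mul, one_mul, zero_mul,
      Finset.sum_ite_eq, Finset.sum_ite_eq', Finset.mem_univ, if_true,
      Finset.sum_const_zero, add_zero, zero_add, Fintype.sum_unique, neg_mul]
    ring
  have hdotzy : ∀ (z : Z) (y' : Y), dot (Amat α γ (Sum.inr (Sum.inl (z, y')))) y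
      = bb y' - q z - γ z y' * t := by
    intro z y'
    simp only [dot, Amat, Fintype.sum_sum_type, ite_mul, one_mul, zero_mul, neg_one_mul,
      Finset.sum_ite_eq, Finset.sum_ite_eq', Finset.mem_univ, if_true, Finset.sum_neg_distrib,
      Finset.sum_const_zero, add_zero, zero_add, Fintype.sum_unique, neg_mul]
    ring
  have hdotsx : ∀ x : X, dot (Amat α γ (Sum.inr (Sum.inr (Sum.inl x)))) y = a x := by
    intro x
    simp only [dot, Amat, Fintype.sum_sum_type, ite_mul, one_mul, zero_mul,
      Finset.sum_ite_eq, Finset.sum_ite_eq', Finset.mem_univ, if_true,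
      Finset.sum_const_zero, add_zero, zero_add, Fintype.sum_unique]
    rfl
  have hdotsy : ∀ y' : Y, dot (Amat α γ (Sum.inr (Sum.inr (Sum.inr (Sum.inl y'))))) y = bb y' := by
    intro y'
    simp only [dot, Amat, Fintype.sum_sum_type, ite_mul, one_mul, zero_mul,
      Finset.sum_ite_eq, Finset.sum_ite_eq', Finset.mem_univ, if_true,
      Finset.sum_const_zero, add_zero, zero_add, Fintype.sum_unique]
    rfl
  have hdotst : dot (Amat α γ (Sum.inr (Sum.inr (Sum.inr (Sum.inr ()))))) y = t := by
    simp only [dot, Amat, Fintype.sum_sum_type, ite_mul, one_mul, zero_mul,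
      Finset.sum_ite_eq, Finset.sum_ite_eq', Finset.mem_univ, if_true,
      Finset.sum_const_zero, add_zero, zero_add, Fintype.sum_unique]
    rfl
  have hdotb : dot (bvec n m δ') y = (∑ x, n x * a x) + (∑ y', m y' * bb y') - δ' * t := by
    simp only [dot, bvec, Fintype.sum_sum_type, zero_mul, Finset.sum_const_zero,
      add_zero, zero_add, Fintype.sum_unique, neg_mul]
    ring
  have ha0 : ∀ x, 0 ≤ a x := fun x => hdotsx x ▸ hy (Sum.inr (Sum.inr (Sum.inl x)))
  have hbb0 : ∀ y', 0 ≤ bb y' := fun y' =>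
    hdotsy y' ▸ hy (Sum.inr (Sum.inr (Sum.inr (Sum.inl y'))))
  have ht0 : 0 ≤ t := hdotst ▸ hy (Sum.inr (Sum.inr (Sum.inr (Sum.inr ()))))
  have hxz : ∀ (x : X) (z : Z), 0 ≤ a x + q z - α x z * t := fun x z =>
    hdotxz x z ▸ hy (Sum.inl (x, z))
  have hzy : ∀ (z : Z) (y' : Y), 0 ≤ bb y' - q z - γ z y' * t := fun z y' =>
    hdotzy z y' ▸ hy (Sum.inr (Sum.inl (z, y')))
  have hblt : (∑ x, n x * a x) + (∑ y', m y' * bb y') - δ' * t < 0 := hdotb ▸ hby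
  rcases eq_or_lt_of_le ht0 with ht0' | htpos
  · exfalso
    have h1 : 0 ≤ ∑ x, n x * a x :=
      Finset.sum_nonneg fun x _ => mul_nonneg (hn x) (ha0 x)
    have h2 : 0 ≤ ∑ y', m y' * bb y' :=
      Finset.sum_nonneg fun y' _ => mul_nonneg (hm y') (hbb0 y')
    rw [← ht0'] at hblt
    linarith
  · have htne : t ≠ 0 := ne_of_gt htpos
    refine ⟨fun x => a x / t, fun y' => bb y' / t, fun z => -(q z) / t, ⟨?_, ?_, ?_, ?_⟩, ?_⟩
    · exact fun x => div_nonneg (ha0 x) ht0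
    · exact fun y' => div_nonneg (hbb0 y') ht0
    · intro x z
      have key : α x z * t - q z ≤ a x := by linarith [hxz x z]
      calc α x z + -(q z) / t = (α x z * t - q z) / t := by
            field_simp
            ring
        _ ≤ a x / t := by gcongr
    · intro z y'
      have key : γ z y' * t + q z ≤ bb y' := by linarith [hzy z y']
      calc γ z y' - -(q z) / t = (γ z y' * t + q z) / t := by
            field_simp
            ring
        _ ≤ bb y' / t := by gcongr
    · have heq : dualObj n m (fun x => a x / t) (fun y' => bb y' / t)
          = ((∑ x, n x * a x) + (∑ y', m y' * bb y')) / t := by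
        simp [dualObj, add_div, Finset.sum_div, mul_div_assoc]
      rw [heq, div_lt_iff₀ htpos]
      linarith
end LPInst
end LP
/-- Strong duality for the hedonic linear program. -/
theorem hedonic_strong_duality (n : X → ℝ) (m : Y → ℝ)
    (hn : ∀ x, 0 ≤ n x) (hm : ∀ y, 0 ≤ m y) (α : X → Z → ℝ) (γ : Z → Y → ℝ) :
    ∃ (μs : X → Z → ℝ) (μd : Z → Y → ℝ) (u : X → ℝ) (v : Y → ℝ) (p : Z → ℝ),
      FeasibleFlow n m μs μd ∧
      (∀ (μs' : X → Z → ℝ) (μd' : Z → Y → ℝ), FeasibleFlow n m μs' μd' →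
        primalObj α γ μs' μd' ≤ primalObj α γ μs μd) ∧
      DualFeasible α γ u v p ∧
      (∀ (u' : X → ℝ) (v' : Y → ℝ) (p' : Z → ℝ), DualFeasible α γ u' v' p' →
        dualObj n m u v ≤ dualObj n m u' v') ∧
      primalObj α γ μs μd = dualObj n m u v := by
  classical
  obtain ⟨μs, μd, hff, hmax⟩ := exists_primal_max n m α γ hn hm
  obtain ⟨u, v, p, hdf, hmin⟩ := exists_dual_min n m α γ hn hm
  refine ⟨μs, μd, u, v, p, hff, hmax, hdf, hmin, ?_⟩
  refine le_antisymm (hedonic_weak_duality n m α γ hff hdf) ?_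
  by_contra hlt
  push_neg at hlt
  obtain ⟨u', v', p', hdf', hlt'⟩ := LPInst.exists_dual_lt n m α γ (dualObj n m u v) hn hm
    (fun μs' μd' h => lt_of_le_of_lt (hmax μs' μd' h) hlt)
  exact absurd (hmin u' v' p' hdf') (not_le.mpr hlt')
end

section
/- Reformulation of the dual program over prices only: the infimum of the dual objective ∑_x n x · u' x + ∑_y m y · v' y over all dual feasible triples (u', v', p') equals the infimum over all p : Z → ℝ of ∑_x n x · max(max_z (α x z + p z), 0) + ∑_y m y · max(max_z (γ z y − p z), 0). -/
open Finset MeasureTheory Real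

variable {X Y Z : Type*} [Fintype X] [Fintype Y] [Fintype Z]
  [Nonempty X] [Nonempty Y] [Nonempty Z]

lemma indirectU_feasible (α : X → Z → ℝ) (γ : Z → Y → ℝ) (p : Z → ℝ) :
    DualFeasible α γ (indirectU α p) (indirectV γ p) p := by
  refine ⟨fun x => le_max_right _ _, fun y => le_max_right _ _, fun x z => ?_, fun z y => ?_⟩
  · exact le_trans (Finset.le_sup' (fun z => α x z + p z) (Finset.mem_univ z)) (le_max_left _ _)
  · exact le_trans (Finset.le_sup' (fun z => γ z y - p z) (Finset.mem_univ z)) (le_max_left _ _)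

lemma indirectU_min (α : X → Z → ℝ) (γ : Z → Y → ℝ) {u : X → ℝ} {v : Y → ℝ} {p : Z → ℝ}
    (h : DualFeasible α γ u v p) :
    (∀ x, indirectU α p x ≤ u x) ∧ (∀ y, indirectV γ p y ≤ v y) := by
  obtain ⟨hu, hv, ha, hg⟩ := h
  constructor
  · intro x
    exact max_le (Finset.sup'_le _ _ fun z _ => ha x z) (hu x)
  · intro y
    exact max_le (Finset.sup'_le _ _ fun z _ => hg z y) (hv y)

/-- The dual program can be reformulated as a minimization over prices only. -/
theorem dual_reformulation_over_prices (n : X → ℝ) (m : Y → ℝ)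
    (hn : ∀ x, 0 ≤ n x) (hm : ∀ y, 0 ≤ m y) (α : X → Z → ℝ) (γ : Z → Y → ℝ) :
    sInf {d : ℝ | ∃ (u' : X → ℝ) (v' : Y → ℝ) (p' : Z → ℝ),
        DualFeasible α γ u' v' p' ∧ d = dualObj n m u' v'} =
      sInf {d : ℝ | ∃ p : Z → ℝ,
        d = (∑ x, n x * indirectU α p x) + ∑ y, m y * indirectV γ p y} := by
  set S := {d : ℝ | ∃ (u' : X → ℝ) (v' : Y → ℝ) (p' : Z → ℝ),
        DualFeasible α γ u' v' p' ∧ d = dualObj n m u' v'} with hS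
  set T := {d : ℝ | ∃ p : Z → ℝ,
        d = (∑ x, n x * indirectU α p x) + ∑ y, m y * indirectV γ p y} with hT
  have hTS : T ⊆ S := by
    rintro d ⟨p, rfl⟩
    exact ⟨_, _, p, indirectU_feasible α γ p, rfl⟩
  have hSbdd : BddBelow S := by
    refine ⟨0, ?_⟩
    rintro d ⟨u, v, p, ⟨hu, hv, -, -⟩, rfl⟩
    have h1 : (0:ℝ) ≤ ∑ x, n x * u x :=
      Finset.sum_nonneg fun x _ => mul_nonneg (hn x) (hu x)
    have h2 : (0:ℝ) ≤ ∑ y, m y * v y :=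
      Finset.sum_nonneg fun y _ => mul_nonneg (hm y) (hv y)
    exact add_nonneg h1 h2
  have hTne : T.Nonempty := ⟨_, fun z => (0:ℝ), rfl⟩
  have hTbdd : BddBelow T := hSbdd.mono hTS
  refine le_antisymm (csInf_le_csInf hSbdd hTne hTS) ?_
  refine le_csInf (hTne.mono hTS) ?_
  rintro d ⟨u, v, p, hfeas, rfl⟩
  obtain ⟨hu, hv⟩ := indirectU_min α γ hfeas
  refine le_trans (csInf_le hTbdd ⟨p, rfl⟩) ?_
  unfold dualObj
  exact add_le_add
    (Finset.sum_le_sum fun x _ => mul_le_mul_of_nonneg_left (hu x) (hn x))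
    (Finset.sum_le_sum fun y _ => mul_le_mul_of_nonneg_left (hv y) (hm y))
end

section
/- Sufficiency direction of the Proposition on equilibrium prices: suppose the feasible flow (μˢ, μᵈ) maximizes the primal objective among feasible flows, the triple (u, v, p₀) is dual feasible and minimizes the dual objective among dual feasible triples, and p : Z → ℝ satisfies max_y (γ z y − v y) ≤ p z ≤ min_x (u x − α x z) for every z. Then (p, μˢ, μᵈ) is a hedonic equilibrium. -/
open Finset MeasureTheory Real

variable {X Y Z : Type*} [Fintype X] [Fintype Y] [Fintype Z]
  [Nonempty X] [Nonempty Y] [Nonempty Z]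

set_option linter.unusedSectionVars false

section Cone
variable {ι : Type*} [Fintype ι] {E : Type*} [AddCommGroup E] [Module ℝ E]

lemma carath_aux (g : ι → E) (k : ℕ) :
    ∀ c : ι → ℝ, (Finset.univ.filter fun i => c i ≠ 0).card ≤ k → (∀ i, 0 ≤ c i) →
    ∃ c' : ι → ℝ, (∀ i, 0 ≤ c' i) ∧ (∑ i, c' i • g i) = (∑ i, c i • g i) ∧
      LinearIndependent ℝ (fun i : {i // c' i ≠ 0} => g i) := by
  classical
  induction k with
  | zero =>
    intro c hcard hc
    refine ⟨c, hc, rfl, ?_⟩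
    have hz : ∀ i, c i = 0 := by
      intro i
      by_contra h
      have hmem : i ∈ Finset.univ.filter fun i => c i ≠ 0 := by simp [h]
      have := Finset.card_pos.mpr ⟨i, hmem⟩
      omega
    have : IsEmpty {i // c i ≠ 0} := ⟨fun j => j.2 (hz j.1)⟩
    exact linearIndependent_empty_type
  | succ k ih =>
    intro c hcard hc
    by_cases hli : LinearIndependent ℝ (fun i : {i // c i ≠ 0} => g i)
    · exact ⟨c, hc, rfl, hli⟩
    have key : ∀ d : ι → ℝ, (∑ i, d i • g i = 0) → (∀ i, d i ≠ 0 → c i ≠ 0) →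
        (∃ i, 0 < d i) →
        ∃ c' : ι → ℝ, (∀ i, 0 ≤ c' i) ∧ (∑ i, c' i • g i) = (∑ i, c i • g i) ∧
          LinearIndependent ℝ (fun i : {i // c' i ≠ 0} => g i) := by
      rintro d hd0 hdsupp ⟨i1, hi1⟩
      have hsne : (Finset.univ.filter fun i => 0 < d i).Nonempty := ⟨i1, by simp [hi1]⟩
      set t := (Finset.univ.filter fun i => 0 < d i).inf' hsne fun i => c i / d i with ht
      obtain ⟨i0, hi0s, hi0⟩ := Finset.exists_mem_eq_inf' hsne (fun i => c i / d i)
      have hdi0 : 0 < d i0 := by simpa using hi0s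
      have htval : t = c i0 / d i0 := hi0
      have htnn : 0 ≤ t := by
        rw [htval]
        exact div_nonneg (hc i0) hdi0.le
      set c' := fun i => c i - t * d i with hc'
      have hc'nn : ∀ i, 0 ≤ c' i := by
        intro i
        rcases le_or_gt (d i) 0 with h | h
        · have h2 : t * d i ≤ 0 := mul_nonpos_iff.mpr (Or.inl ⟨htnn, h⟩)
          have := hc i
          simp only [hc']
          linarith
        · have hts : t ≤ c i / d i := Finset.inf'_le _ (by simp [h])
          have h2 : t * d i ≤ c i := by
            rw [le_div_iff₀ h] at hts
            exact hts
          simp only [hc']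
          linarith
      have hsum : ∑ i, c' i • g i = ∑ i, c i • g i := by
        simp only [hc', sub_smul]
        rw [Finset.sum_sub_distrib]
        have h3 : ∑ i, (t * d i) • g i = t • ∑ i, d i • g i := by
          rw [Finset.smul_sum]
          exact Finset.sum_congr rfl fun i _ => (smul_smul t (d i) (g i)).symm
        rw [h3, hd0, smul_zero, sub_zero]
      have hsub : (Finset.univ.filter fun i => c' i ≠ 0) ⊆
          (Finset.univ.filter fun i => c i ≠ 0) := by
        intro i hi
        simp only [Finset.mem_filter, Finset.mem_univ, true_and] at hi ⊢
        intro h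
        have hdz : d i = 0 := by
          by_contra hd
          exact (hdsupp i hd) h
        exact hi (by simp [hc', h, hdz])
      have hi0ne : c i0 ≠ 0 := hdsupp i0 (ne_of_gt hdi0)
      have hi0in : i0 ∈ Finset.univ.filter fun i => c i ≠ 0 := by simp [hi0ne]
      have hi0notin : i0 ∉ Finset.univ.filter fun i => c' i ≠ 0 := by
        simp only [Finset.mem_filter, Finset.mem_univ, true_and, not_not]
        simp [hc', htval, div_mul_cancel₀ _ (ne_of_gt hdi0)]
      have hcard' : (Finset.univ.filter fun i => c' i ≠ 0).card ≤ k := by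
        have hss : (Finset.univ.filter fun i => c' i ≠ 0) ⊂
            (Finset.univ.filter fun i => c i ≠ 0) :=
          ⟨hsub, fun hcon => hi0notin (hcon hi0in)⟩
        have := Finset.card_lt_card hss
        omega
      obtain ⟨c'', h1, h2, h3⟩ := ih c' hcard' hc'nn
      exact ⟨c'', h1, h2.trans hsum, h3⟩
    obtain ⟨f, hfsum, j0, hj0⟩ := Fintype.not_linearIndependent_iff.mp hli
    set d := fun i => if h : c i ≠ 0 then f ⟨i, h⟩ else 0 with hd
    have hsupp : ∀ i, d i ≠ 0 → c i ≠ 0 := by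
      intro i hi h
      simp [hd, h] at hi
    have hdj : ∀ j : {i // c i ≠ 0}, d j.1 = f j := by
      intro j
      simp [hd, j.2]
    have hdsum : ∑ i, d i • g i = 0 := by
      have h1 : ∑ i, d i • g i =
          ∑ i ∈ Finset.univ.filter (fun i => c i ≠ 0), d i • g i := by
        refine (Finset.sum_subset (Finset.filter_subset _ _) ?_).symm
        intro i _ hi
        simp only [Finset.mem_filter, Finset.mem_univ, true_and, not_not] at hi
        simp [hd, hi]
      have h2 : ∑ i ∈ Finset.univ.filter (fun i => c i ≠ 0), d i • g i
          = ∑ j : {i // c i ≠ 0}, d j.1 • g j.1 :=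
        Finset.sum_subtype _ (by simp) _
      rw [h1, h2]
      rw [← hfsum]
      exact Finset.sum_congr rfl fun j _ => by rw [hdj j]
    have hdj0 : d j0.1 ≠ 0 := by rw [hdj j0]; exact hj0
    rcases lt_or_gt_of_ne hdj0 with hneg | hpos
    · refine key (fun i => -d i) ?_ ?_ ⟨j0.1, by simpa using hneg⟩
      · simp only [neg_smul]
        rw [Finset.sum_neg_distrib, hdsum, neg_zero]
      · intro i hi
        exact hsupp i (by simpa using hi)
    · exact key d hdsum hsupp ⟨j0.1, hpos⟩
end Cone
section Cone2
open Finset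
variable {ι : Type*} [Fintype ι] {E : Type*} [NormedAddCommGroup E]
  [NormedSpace ℝ E] [FiniteDimensional ℝ E]

noncomputable def coneMap (g : ι → E) (T : Finset ι) : ({i // i ∈ T} → ℝ) →ₗ[ℝ] E where
  toFun c := ∑ i, c i • g i.1
  map_add' a b := by
    simp only [Pi.add_apply, add_smul]
    rw [Finset.sum_add_distrib]
  map_smul' r a := by
    simp only [Pi.smul_apply, smul_eq_mul, RingHom.id_apply]
    rw [Finset.smul_sum]
    exact Finset.sum_congr rfl fun i _ => (smul_smul r (a i) (g i.1)).symm

lemma fgcone_isClosed (g : ι → E) :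
    IsClosed {w : E | ∃ c : ι → ℝ, (∀ i, 0 ≤ c i) ∧ ∑ i, c i • g i = w} := by
  classical
  have main : {w : E | ∃ c : ι → ℝ, (∀ i, 0 ≤ c i) ∧ ∑ i, c i • g i = w}
      = ⋃ T ∈ {T : Finset ι | LinearIndependent ℝ (fun i : {i // i ∈ T} => g i.1)},
        coneMap g T '' {c | ∀ i, 0 ≤ c i} := by
    ext w
    simp only [Set.mem_setOf_eq, Set.mem_iUnion, Set.mem_image, exists_prop]
    constructor
    · rintro ⟨c, hc, hw⟩
      obtain ⟨c', hc', hsum, hli⟩ := carath_aux g (Fintype.card ι) c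
        (le_trans (Finset.card_filter_le _ _) (by simp)) hc
      refine ⟨Finset.univ.filter fun i => c' i ≠ 0, ?_, fun i => c' i.1, fun i => hc' i.1, ?_⟩
      · -- linear independence transfer
        have h2 := hli.comp
          (fun j : {i // i ∈ Finset.univ.filter fun i => c' i ≠ 0} =>
            (⟨j.1, (Finset.mem_filter.mp j.2).2⟩ : {i // c' i ≠ 0}))
          (fun a b hab => by apply Subtype.ext; exact congrArg (fun s : {i // c' i ≠ 0} => s.1) hab)
        simpa [Function.comp_def] using h2
      · -- sum over T equals w
        have h1 : coneMap g (Finset.univ.filter fun i => c' i ≠ 0) (fun i => c' i.1)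
            = ∑ i ∈ Finset.univ.filter fun i => c' i ≠ 0, c' i • g i := by
          exact Finset.sum_subtype _ (by simp) (fun i => c' i • g i) |>.symm
        rw [h1, Finset.sum_filter_of_ne (fun i _ h => by
          intro hc'i; exact h (by rw [hc'i, zero_smul]) ) ]
        rw [hsum]
        exact hw
    · rintro ⟨T, hT, c, hc, hw⟩
      refine ⟨fun i => if h : i ∈ T then c ⟨i, h⟩ else 0, ?_, ?_⟩
      · intro i
        by_cases h : i ∈ T
        · simpa [h] using hc ⟨i, h⟩
        · simp [h]
      · rw [← hw]
        have h1 : ∑ i, (if h : i ∈ T then c ⟨i, h⟩ else 0) • g i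
            = ∑ i ∈ T, (if h : i ∈ T then c ⟨i, h⟩ else 0) • g i := by
          refine (Finset.sum_subset (Finset.subset_univ T) ?_).symm
          intro i _ hi
          simp [hi]
        rw [h1]
        rw [Finset.sum_subtype _ (fun i => Iff.rfl) (fun i => (if h : i ∈ T then c ⟨i, h⟩ else 0) • g i)]
        exact Finset.sum_congr rfl fun i _ => by simp [i.2]
  rw [main]
  refine Set.Finite.isClosed_biUnion (Set.toFinite _) ?_
  intro T hT
  have hker : LinearMap.ker (coneMap g T) = ⊥ := by
    rw [LinearMap.ker_eq_bot']
    intro c hc0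
    have := Fintype.linearIndependent_iff.mp hT c hc0
    funext i
    exact this i
  have hemb := LinearMap.isClosedEmbedding_of_injective (f := coneMap g T) hker
  refine hemb.isClosedMap _ ?_
  have horth : {c : {i // i ∈ T} → ℝ | ∀ i, 0 ≤ c i} = ⋂ i, {c | 0 ≤ c i} := by
    ext c; simp [Set.mem_iInter]
  rw [horth]
  exact isClosed_iInter fun i => isClosed_le continuous_const (continuous_apply i)
end Cone2
section Sep
open Finset
variable {ι : Type*} [Fintype ι] {E : Type*} [NormedAddCommGroup E]
  [NormedSpace ℝ E] [FiniteDimensional ℝ E]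

lemma fgcone_separation (g : ι → E) (b : E)
    (hb : ¬ ∃ c : ι → ℝ, (∀ i, 0 ≤ c i) ∧ ∑ i, c i • g i = b) :
    ∃ f : E →L[ℝ] ℝ, (∀ i, f (g i) ≤ 0) ∧ 0 < f b := by
  classical
  set S := {w : E | ∃ c : ι → ℝ, (∀ i, 0 ≤ c i) ∧ ∑ i, c i • g i = w} with hS
  have hconv : Convex ℝ S := by
    rintro w1 ⟨c1, hc1, hw1⟩ w2 ⟨c2, hc2, hw2⟩ a b ha hb hab
    refine ⟨fun i => a * c1 i + b * c2 i,
      fun i => add_nonneg (mul_nonneg ha (hc1 i)) (mul_nonneg hb (hc2 i)), ?_⟩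
    simp only [add_smul, mul_smul]
    rw [Finset.sum_add_distrib, ← Finset.smul_sum, ← Finset.smul_sum, hw1, hw2]
  obtain ⟨f, u0, hfu, hub⟩ := geometric_hahn_banach_closed_point hconv (fgcone_isClosed g)
    (by simpa [hS] using hb)
  have h0S : (0 : E) ∈ S := ⟨0, by simp⟩
  have hu0 : 0 < u0 := by simpa using hfu 0 h0S
  have hle : ∀ w ∈ S, f w ≤ 0 := by
    rintro w ⟨c, hc, hw⟩
    by_contra h
    push_neg at h
    have hmem : ((u0 + 1) / f w) • w ∈ S := by
      refine ⟨fun i => ((u0 + 1) / f w) * c i,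
        fun i => mul_nonneg (by positivity) (hc i), ?_⟩
      simp only [mul_smul]
      rw [← Finset.smul_sum, hw]
    have h2 := hfu _ hmem
    rw [_root_.map_smul, smul_eq_mul, div_mul_cancel₀ _ (ne_of_gt h)] at h2
    linarith
  refine ⟨f, fun i => hle (g i) ⟨fun j => if j = i then 1 else 0, ?_, ?_⟩, hu0.trans hub⟩
  · intro j; by_cases h : j = i <;> simp [h]
  · rw [Finset.sum_eq_single i]
    · simp
    · intro j _ hj; simp [hj]
    · intro h; exact absurd (Finset.mem_univ i) h
end Sep
section Hed
open Finset
variable {X Y Z : Type*} [Fintype X] [Fintype Y] [Fintype Z]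

open Classical in
noncomputable def eX (x : X) : (X ⊕ Y) ⊕ (Z ⊕ Unit) → ℝ :=
  Sum.elim (Sum.elim (fun x' => if x' = x then 1 else 0) (fun _ => 0)) (fun _ => 0)

open Classical in
noncomputable def eY (y : Y) : (X ⊕ Y) ⊕ (Z ⊕ Unit) → ℝ :=
  Sum.elim (Sum.elim (fun _ => 0) (fun y' => if y' = y then 1 else 0)) (fun _ => 0)

open Classical in
noncomputable def eZ (z : Z) : (X ⊕ Y) ⊕ (Z ⊕ Unit) → ℝ :=
  Sum.elim (fun _ => 0) (Sum.elim (fun z' => if z' = z then 1 else 0) (fun _ => 0))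

noncomputable def eT : (X ⊕ Y) ⊕ (Z ⊕ Unit) → ℝ :=
  Sum.elim (fun _ => 0) (Sum.elim (fun _ => 0) (fun _ => 1))

noncomputable def bvec (n : X → ℝ) (m : Y → ℝ) (a : ℝ) : (X ⊕ Y) ⊕ (Z ⊕ Unit) → ℝ :=
  Sum.elim (Sum.elim n m) (Sum.elim (fun _ => 0) (fun _ => a))

noncomputable def gens (α : X → Z → ℝ) (γ : Z → Y → ℝ) :
    ((X × Z) ⊕ (Z × Y)) ⊕ ((X ⊕ Y) ⊕ Unit) → ((X ⊕ Y) ⊕ (Z ⊕ Unit)) → ℝ :=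
  Sum.elim
    (Sum.elim (fun xz => eX xz.1 + eZ xz.2 + α xz.1 xz.2 • eT)
              (fun zy => eY zy.2 - eZ zy.1 + γ zy.1 zy.2 • eT))
    (Sum.elim (Sum.elim (fun x => eX x) (fun y : Y => eY y)) (fun _ => -eT))

variable (α : X → Z → ℝ) (γ : Z → Y → ℝ)

open Classical in
lemma sum_gens_XL (c : ((X × Z) ⊕ (Z × Y)) ⊕ ((X ⊕ Y) ⊕ Unit) → ℝ) (x₀ : X) :
    (∑ i, c i • gens α γ i) (Sum.inl (Sum.inl x₀)) =
      (∑ z, c (Sum.inl (Sum.inl (x₀, z)))) + c (Sum.inr (Sum.inl (Sum.inl x₀))) := by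
  rw [Finset.sum_apply]
  simp [Fintype.sum_sum_type, Fintype.sum_prod_type, gens, eX, eY, eZ, eT, mul_ite,
    Finset.sum_ite_irrel, Finset.sum_const_zero, Finset.sum_ite_eq]
  rw [Finset.sum_eq_single x₀]
  · simp
  · intro b _ hb
    simp [if_neg (fun h : x₀ = b => hb h.symm)]
  · intro h; exact absurd (Finset.mem_univ x₀) h
end Hed
section Hed2
open Finset
variable {X Y Z : Type*} [Fintype X] [Fintype Y] [Fintype Z]
variable (α : X → Z → ℝ) (γ : Z → Y → ℝ)

open Classical in
lemma sum_gens_YL (c : ((X × Z) ⊕ (Z × Y)) ⊕ ((X ⊕ Y) ⊕ Unit) → ℝ) (y₀ : Y) :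
    (∑ i, c i • gens α γ i) (Sum.inl (Sum.inr y₀)) =
      (∑ z, c (Sum.inl (Sum.inr (z, y₀)))) + c (Sum.inr (Sum.inl (Sum.inr y₀))) := by
  rw [Finset.sum_apply]
  simp [Fintype.sum_sum_type, Fintype.sum_prod_type, gens, eX, eY, eZ, eT, mul_ite,
    Finset.sum_ite_irrel, Finset.sum_const_zero, Finset.sum_ite_eq]

open Classical in
lemma sum_gens_ZR (c : ((X × Z) ⊕ (Z × Y)) ⊕ ((X ⊕ Y) ⊕ Unit) → ℝ) (z₀ : Z) :
    (∑ i, c i • gens α γ i) (Sum.inr (Sum.inl z₀)) =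
      (∑ x, c (Sum.inl (Sum.inl (x, z₀)))) - ∑ y, c (Sum.inl (Sum.inr (z₀, y))) := by
  rw [Finset.sum_apply]
  simp [Fintype.sum_sum_type, Fintype.sum_prod_type, gens, eX, eY, eZ, eT, mul_ite,
    Finset.sum_ite_irrel, Finset.sum_const_zero, Finset.sum_ite_eq]
  have h : (∑ x : Z, ∑ y : Y, if z₀ = x then c (Sum.inl (Sum.inr (x, y))) else 0)
      = ∑ y, c (Sum.inl (Sum.inr (z₀, y))) := by
    rw [Finset.sum_eq_single z₀]
    · simp
    · intro b _ hb
      simp [if_neg (fun h : z₀ = b => hb h.symm)]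
    · intro h; exact absurd (Finset.mem_univ z₀) h
  rw [h]
  ring

open Classical in
lemma sum_gens_T (c : ((X × Z) ⊕ (Z × Y)) ⊕ ((X ⊕ Y) ⊕ Unit) → ℝ) :
    (∑ i, c i • gens α γ i) (Sum.inr (Sum.inr ())) =
      (∑ x, ∑ z, c (Sum.inl (Sum.inl (x, z))) * α x z)
        + (∑ z, ∑ y, c (Sum.inl (Sum.inr (z, y))) * γ z y)
        - c (Sum.inr (Sum.inr ())) := by
  rw [Finset.sum_apply]
  simp [Fintype.sum_sum_type, Fintype.sum_prod_type, gens, eX, eY, eZ, eT, mul_ite,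
    Finset.sum_ite_irrel, Finset.sum_const_zero, Finset.sum_ite_eq]
  ring
end Hed2
section Hed3
open Finset
variable {X Y Z : Type*} [Fintype X] [Fintype Y] [Fintype Z]

open Classical in
lemma bvec_decomp (n : X → ℝ) (m : Y → ℝ) (a : ℝ) :
    bvec (Z := Z) n m a = (∑ x, n x • eX x) + ((∑ y, m y • eY y) + a • eT) := by
  funext r
  have hx : ∀ x₀ : X, (∑ x, n x • eX (Y := Y) (Z := Z) x) (Sum.inl (Sum.inl x₀)) = n x₀ := by
    intro x₀
    rw [Finset.sum_apply, Finset.sum_eq_single x₀]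
    · simp [eX]
    · intro b _ hb
      simp [eX, if_neg (fun h : x₀ = b => hb h.symm)]
    · intro h; exact absurd (Finset.mem_univ x₀) h
  have hy : ∀ y₀ : Y, (∑ y, m y • eY (X := X) (Z := Z) y) (Sum.inl (Sum.inr y₀)) = m y₀ := by
    intro y₀
    rw [Finset.sum_apply, Finset.sum_eq_single y₀]
    · simp [eY]
    · intro b _ hb
      simp [eY, if_neg (fun h : y₀ = b => hb h.symm)]
    · intro h; exact absurd (Finset.mem_univ y₀) h
  rcases r with (x | y) | (z | u)
  · simp [bvec, Pi.add_apply, hx, eY, eT, Finset.sum_apply, eX]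
  · simp [bvec, Pi.add_apply, hy, eX, eT, Finset.sum_apply, eY]
  · simp [bvec, Pi.add_apply, Finset.sum_apply, eX, eY, eT]
  · simp [bvec, Pi.add_apply, Finset.sum_apply, eX, eY, eT]
end Hed3
section SD
open Finset
variable {X Y Z : Type*} [Fintype X] [Fintype Y] [Fintype Z]

lemma strong_duality (n : X → ℝ) (m : Y → ℝ) (α : X → Z → ℝ) (γ : Z → Y → ℝ)
    (μs : X → Z → ℝ) (μd : Z → Y → ℝ) (u : X → ℝ) (v : Y → ℝ)
    (hflow : FeasibleFlow n m μs μd)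
    (hmax : ∀ (μs' : X → Z → ℝ) (μd' : Z → Y → ℝ), FeasibleFlow n m μs' μd' →
      primalObj α γ μs' μd' ≤ primalObj α γ μs μd)
    (hmin : ∀ (u' : X → ℝ) (v' : Y → ℝ) (p' : Z → ℝ), DualFeasible α γ u' v' p' →
      dualObj n m u v ≤ dualObj n m u' v') :
    dualObj n m u v ≤ primalObj α γ μs μd := by
  classical
  obtain ⟨hs0, hd0, hsn, hdm, hmc⟩ := hflow
  by_contra hcon
  push_neg at hcon
  set P := primalObj α γ μs μd with hP
  set ε := dualObj n m u v - P with hε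
  have hεpos : 0 < ε := by rw [hε]; linarith
  -- the augmented target vector is not in the cone
  have hb : ¬ ∃ c : ((X × Z) ⊕ (Z × Y)) ⊕ ((X ⊕ Y) ⊕ Unit) → ℝ, (∀ i, 0 ≤ c i) ∧ ∑ i, c i • gens α γ i = bvec n m (P + ε) := by
    rintro ⟨c, hc, hsum⟩
    set μs' := fun x z => c (Sum.inl (Sum.inl (x, z))) with hμs'
    set μd' := fun z y => c (Sum.inl (Sum.inr (z, y))) with hμd'
    have hXc : ∀ x, (∑ z, μs' x z) + c (Sum.inr (Sum.inl (Sum.inl x))) = n x := by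
      intro x
      have h := congrFun hsum (Sum.inl (Sum.inl x))
      rw [sum_gens_XL] at h
      simpa [bvec] using h
    have hYc : ∀ y, (∑ z, μd' z y) + c (Sum.inr (Sum.inl (Sum.inr y))) = m y := by
      intro y
      have h := congrFun hsum (Sum.inl (Sum.inr y))
      rw [sum_gens_YL] at h
      simpa [bvec] using h
    have hZc : ∀ z, (∑ x, μs' x z) - ∑ y, μd' z y = 0 := by
      intro z
      have h := congrFun hsum (Sum.inr (Sum.inl z))
      rw [sum_gens_ZR] at h
      simpa [bvec] using h
    have hTc : (∑ x, ∑ z, μs' x z * α x z) + (∑ z, ∑ y, μd' z y * γ z y)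
        - c (Sum.inr (Sum.inr ())) = P + ε := by
      have h := congrFun hsum (Sum.inr (Sum.inr ()))
      rw [sum_gens_T] at h
      simpa [bvec] using h
    have hfeas : FeasibleFlow n m μs' μd' := by
      refine ⟨fun x z => hc _, fun z y => hc _, fun x => ?_, fun y => ?_, fun z => ?_⟩
      · have := hXc x
        have h2 := hc (Sum.inr (Sum.inl (Sum.inl x)))
        linarith
      · have := hYc y
        have h2 := hc (Sum.inr (Sum.inl (Sum.inr y)))
        linarith
      · have := hZc z
        linarith
    have hobj := hmax μs' μd' hfeas
    have h2 := hc (Sum.inr (Sum.inr ()))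
    simp only [primalObj] at hobj
    linarith
  obtain ⟨f, hfg, hfb⟩ := fgcone_separation (gens α γ) _ hb
  have hX : ∀ x, f (eX x) ≤ 0 := fun x => by
    simpa [gens] using hfg (Sum.inr (Sum.inl (Sum.inl x)))
  have hY : ∀ y, f (eY y) ≤ 0 := fun y => by
    simpa [gens] using hfg (Sum.inr (Sum.inl (Sum.inr y)))
  have hlam0 : 0 ≤ f eT := by
    have h := hfg (Sum.inr (Sum.inr ()))
    simp only [gens, Sum.elim_inr, map_neg] at h
    linarith
  have hsup : ∀ x z, f (eX x) + f (eZ z) + α x z * f eT ≤ 0 := by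
    intro x z
    have h := hfg (Sum.inl (Sum.inl (x, z)))
    simp only [gens, Sum.elim_inl, Sum.elim_inr, map_add, _root_.map_smul, smul_eq_mul] at h
    linarith
  have hdem : ∀ z y, f (eY y) - f (eZ z) + γ z y * f eT ≤ 0 := by
    intro z y
    have h := hfg (Sum.inl (Sum.inr (z, y)))
    simp only [gens, Sum.elim_inl, Sum.elim_inr, map_add, map_sub, _root_.map_smul, smul_eq_mul] at h
    linarith
  have hfb_eq : ∀ a : ℝ, f (bvec n m a) =
      (∑ x, n x * f (eX x)) + (∑ y, m y * f (eY y)) + a * f eT := by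
    intro a
    rw [bvec_decomp, map_add, map_add, _root_.map_sum, _root_.map_sum, _root_.map_smul, smul_eq_mul]
    simp only [_root_.map_smul, smul_eq_mul]
    ring
  -- membership of the true value vector
  set c₀ : ((X × Z) ⊕ (Z × Y)) ⊕ ((X ⊕ Y) ⊕ Unit) → ℝ :=
    Sum.elim (Sum.elim (fun xz : X × Z => μs xz.1 xz.2) (fun zy : Z × Y => μd zy.1 zy.2))
      (Sum.elim (Sum.elim (fun x => n x - ∑ z, μs x z) (fun y => m y - ∑ z, μd z y))
        (fun _ => 0)) with hc₀
  have hc₀nn : ∀ i, 0 ≤ c₀ i := by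
    rintro ((⟨x, z⟩ | ⟨z, y⟩) | ((x | y) | u))
    · simpa [hc₀] using hs0 x z
    · simpa [hc₀] using hd0 z y
    · simp only [hc₀, Sum.elim_inr, Sum.elim_inl, sub_nonneg]
      exact hsn x
    · simp only [hc₀, Sum.elim_inr, Sum.elim_inl, sub_nonneg]
      exact hdm y
    · simp [hc₀]
  have hsum0 : ∑ i, c₀ i • gens α γ i = bvec n m P := by
    funext r
    rcases r with (x | y) | (z | u)
    · rw [sum_gens_XL]
      simp [hc₀, bvec]
    · rw [sum_gens_YL]
      simp [hc₀, bvec]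
    · rw [sum_gens_ZR]
      simp only [hc₀, Sum.elim_inl, bvec, Sum.elim_inr]
      have := hmc z
      linarith
    · obtain ⟨⟩ := u
      rw [sum_gens_T]
      simp only [hc₀, Sum.elim_inl, Sum.elim_inr, bvec, sub_zero]
      rw [hP, primalObj]
  have hfP : f (bvec n m P) ≤ 0 := by
    rw [← hsum0, _root_.map_sum]
    apply Finset.sum_nonpos
    intro i _
    rw [_root_.map_smul, smul_eq_mul]
    exact mul_nonpos_iff.mpr (Or.inl ⟨hc₀nn i, hfg i⟩)
  have hlampos : 0 < f eT := by
    by_contra hle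
    push_neg at hle
    have h1 := hfb_eq P
    have h2 := hfb_eq (P + ε)
    have h3 : ε * f eT ≤ 0 := mul_nonpos_iff.mpr (Or.inl ⟨hεpos.le, hle⟩)
    have h4 : f (bvec n m (P + ε)) = f (bvec n m P) + ε * f eT := by
      rw [h1, h2]; ring
    linarith
  -- the dual solution extracted from the separating functional
  have hfeas' : DualFeasible α γ (fun x => -f (eX x) / f eT) (fun y => -f (eY y) / f eT)
      (fun z => f (eZ z) / f eT) := by
    refine ⟨fun x => div_nonneg (neg_nonneg.mpr (hX x)) hlampos.le,
      fun y => div_nonneg (neg_nonneg.mpr (hY y)) hlampos.le, fun x z => ?_, fun z y => ?_⟩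
    · have h := hsup x z
      rw [show α x z + f (eZ z) / f eT = (α x z * f eT + f (eZ z)) / f eT by field_simp]
      rw [div_le_div_iff_of_pos_right hlampos]
      linarith
    · have h := hdem z y
      rw [show γ z y - f (eZ z) / f eT = (γ z y * f eT - f (eZ z)) / f eT by field_simp]
      rw [div_le_div_iff_of_pos_right hlampos]
      linarith
  have happ := hmin _ _ _ hfeas'
  have hval : dualObj n m (fun x => -f (eX x) / f eT) (fun y => -f (eY y) / f eT) < P + ε := by
    rw [dualObj]
    have he : (∑ x, n x * (-f (eX x) / f eT)) + ∑ y, m y * (-f (eY y) / f eT)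
        = (-(∑ x, n x * f (eX x)) - ∑ y, m y * f (eY y)) / f eT := by
      simp only [← mul_div_assoc]
      rw [← Finset.sum_div, ← Finset.sum_div, ← add_div]
      congr 1
      simp only [mul_neg, Finset.sum_neg_distrib]
      ring
    rw [he, div_lt_iff₀ hlampos]
    have h2 := hfb_eq (P + ε)
    rw [h2] at hfb
    linarith
  have : dualObj n m u v = P + ε := by rw [hε]; ring
  rw [this] at happ
  linarith
end SD

/-- Sufficiency direction of the Proposition: any price vector within the bounds, combined
with a primal optimal flow, forms a hedonic equilibrium. -/
theorem price_bounds_sufficient (n : X → ℝ) (m : Y → ℝ)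
    (hn : ∀ x, 0 ≤ n x) (hm : ∀ y, 0 ≤ m y) (α : X → Z → ℝ) (γ : Z → Y → ℝ)
    (μs : X → Z → ℝ) (μd : Z → Y → ℝ) (u : X → ℝ) (v : Y → ℝ) (p₀ p : Z → ℝ)
    (hflow : FeasibleFlow n m μs μd)
    (hmax : ∀ (μs' : X → Z → ℝ) (μd' : Z → Y → ℝ), FeasibleFlow n m μs' μd' →
      primalObj α γ μs' μd' ≤ primalObj α γ μs μd)
    (hdual : DualFeasible α γ u v p₀)
    (hmin : ∀ (u' : X → ℝ) (v' : Y → ℝ) (p' : Z → ℝ), DualFeasible α γ u' v' p' →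
      dualObj n m u v ≤ dualObj n m u' v')
    (hp : ∀ z, univ.sup' univ_nonempty (fun y => γ z y - v y) ≤ p z ∧
      p z ≤ univ.inf' univ_nonempty (fun x => u x - α x z)) :
    HedonicEquilibrium n m α γ p μs μd := by
  classical
  obtain ⟨hu0, hv0, -, -⟩ := hdual
  have hαu : ∀ x z, α x z + p z ≤ u x := by
    intro x z
    have h1 : p z ≤ u x - α x z :=
      le_trans (hp z).2 (Finset.inf'_le _ (Finset.mem_univ x))
    linarith
  have hγv : ∀ z y, γ z y - p z ≤ v y := by
    intro z y
    have h1 : γ z y - v y ≤ p z :=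
      le_trans (Finset.le_sup' (fun y => γ z y - v y) (Finset.mem_univ y)) (hp z).1
    linarith
  have hgap : dualObj n m u v ≤ primalObj α γ μs μd :=
    strong_duality n m α γ μs μd u v hflow hmax hmin
  have hUle : ∀ x, indirectU α p x ≤ u x := by
    intro x
    apply max_le _ (hu0 x)
    exact Finset.sup'_le _ _ fun z _ => hαu x z
  have hVle : ∀ y, indirectV γ p y ≤ v y := by
    intro y
    apply max_le _ (hv0 y)
    exact Finset.sup'_le _ _ fun z _ => hγv z y
  obtain ⟨hs0, hd0, hsn, hdm, hmc⟩ := hflow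
  -- weak duality chain with termwise extraction
  have h1 : ∀ x, ∑ z, μs x z * α x z ≤ ∑ z, μs x z * (u x - p z) :=
    fun x => Finset.sum_le_sum fun z _ =>
      mul_le_mul_of_nonneg_left (by linarith [hαu x z]) (hs0 x z)
  have h2 : ∀ z, ∑ y, μd z y * γ z y ≤ ∑ y, μd z y * (v y + p z) :=
    fun z => Finset.sum_le_sum fun y _ =>
      mul_le_mul_of_nonneg_left (by linarith [hγv z y]) (hd0 z y)
  have eM1 : ∑ x, ∑ z, μs x z * (u x - p z)
      = (∑ x, (∑ z, μs x z) * u x) - ∑ z, (∑ x, μs x z) * p z := by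
    have hx : ∀ x, ∑ z, μs x z * (u x - p z)
        = (∑ z, μs x z) * u x - ∑ z, μs x z * p z := by
      intro x
      rw [Finset.sum_mul, ← Finset.sum_sub_distrib]
      exact Finset.sum_congr rfl fun z _ => by ring
    rw [Finset.sum_congr rfl fun x _ => hx x, Finset.sum_sub_distrib]
    congr 1
    rw [Finset.sum_comm]
    exact Finset.sum_congr rfl fun z _ => (Finset.sum_mul _ _ _).symm
  have eM2 : ∑ z, ∑ y, μd z y * (v y + p z)
      = (∑ y, (∑ z, μd z y) * v y) + ∑ z, (∑ y, μd z y) * p z := by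
    have hz : ∀ z, ∑ y, μd z y * (v y + p z)
        = (∑ y, μd z y * v y) + (∑ y, μd z y) * p z := by
      intro z
      rw [Finset.sum_mul, ← Finset.sum_add_distrib]
      exact Finset.sum_congr rfl fun y _ => by ring
    rw [Finset.sum_congr rfl fun z _ => hz z, Finset.sum_add_distrib]
    congr 1
    rw [Finset.sum_comm]
    exact Finset.sum_congr rfl fun y _ => (Finset.sum_mul _ _ _).symm
  have eMC : ∑ z, (∑ x, μs x z) * p z = ∑ z, (∑ y, μd z y) * p z :=
    Finset.sum_congr rfl fun z _ => by rw [hmc z]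
  have hS1 : ∑ x, (∑ z, μs x z) * u x ≤ ∑ x, n x * u x :=
    Finset.sum_le_sum fun x _ => mul_le_mul_of_nonneg_right (hsn x) (hu0 x)
  have hS2 : ∑ y, (∑ z, μd z y) * v y ≤ ∑ y, m y * v y :=
    Finset.sum_le_sum fun y _ => mul_le_mul_of_nonneg_right (hdm y) (hv0 y)
  have hT1 : ∑ x, ∑ z, μs x z * α x z ≤ ∑ x, ∑ z, μs x z * (u x - p z) :=
    Finset.sum_le_sum fun x _ => h1 x
  have hT2 : ∑ z, ∑ y, μd z y * γ z y ≤ ∑ z, ∑ y, μd z y * (v y + p z) :=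
    Finset.sum_le_sum fun z _ => h2 z
  rw [primalObj] at hgap
  rw [dualObj] at hgap
  -- all inequalities in the chain are equalities
  have q1 : ∑ x, ∑ z, μs x z * α x z = ∑ x, ∑ z, μs x z * (u x - p z) := by linarith
  have q2 : ∑ z, ∑ y, μd z y * γ z y = ∑ z, ∑ y, μd z y * (v y + p z) := by linarith
  have q3 : ∑ x, (∑ z, μs x z) * u x = ∑ x, n x * u x := by linarith
  have q4 : ∑ y, (∑ z, μd z y) * v y = ∑ y, m y * v y := by linarith
  have w1 : ∀ x z, μs x z * α x z = μs x z * (u x - p z) := by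
    intro x z
    have hx := (Finset.sum_eq_sum_iff_of_le fun x _ => h1 x).mp q1 x (Finset.mem_univ x)
    exact (Finset.sum_eq_sum_iff_of_le fun z _ =>
      mul_le_mul_of_nonneg_left (by linarith [hαu x z]) (hs0 x z)).mp hx z (Finset.mem_univ z)
  have w2 : ∀ z y, μd z y * γ z y = μd z y * (v y + p z) := by
    intro z y
    have hz := (Finset.sum_eq_sum_iff_of_le fun z _ => h2 z).mp q2 z (Finset.mem_univ z)
    exact (Finset.sum_eq_sum_iff_of_le fun y _ =>
      mul_le_mul_of_nonneg_left (by linarith [hγv z y]) (hd0 z y)).mp hz y (Finset.mem_univ y)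
  have w3 : ∀ x, (∑ z, μs x z) * u x = n x * u x := fun x =>
    (Finset.sum_eq_sum_iff_of_le fun x _ =>
      mul_le_mul_of_nonneg_right (hsn x) (hu0 x)).mp q3 x (Finset.mem_univ x)
  have w4 : ∀ y, (∑ z, μd z y) * v y = m y * v y := fun y =>
    (Finset.sum_eq_sum_iff_of_le fun y _ =>
      mul_le_mul_of_nonneg_right (hdm y) (hv0 y)).mp q4 y (Finset.mem_univ y)
  refine ⟨⟨hs0, hd0, hsn, hdm, hmc⟩, ?_, ?_, ?_, ?_⟩
  · intro x z hpos
    have heq : α x z = u x - p z := mul_left_cancel₀ (ne_of_gt hpos) (w1 x z)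
    have hle1 : α x z + p z ≤ indirectU α p x :=
      le_trans (Finset.le_sup' (fun z => α x z + p z) (Finset.mem_univ z)) (le_max_left _ _)
    have := hUle x
    unfold indirectU at *
    linarith
  · intro z y hpos
    have heq : γ z y = v y + p z := mul_left_cancel₀ (ne_of_gt hpos) (w2 z y)
    have hle1 : γ z y - p z ≤ indirectV γ p y :=
      le_trans (Finset.le_sup' (fun z => γ z y - p z) (Finset.mem_univ z)) (le_max_left _ _)
    have := hVle y
    unfold indirectV at *
    linarith
  · intro x hx
    have hux : 0 < u x := lt_of_lt_of_le hx (hUle x)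
    exact mul_right_cancel₀ (ne_of_gt hux) (w3 x)
  · intro y hy
    have hvy : 0 < v y := lt_of_lt_of_le hy (hVle y)
    exact mul_right_cancel₀ (ne_of_gt hvy) (w4 y)
end

section
/- Equivalence with the assignment game of Chiappori–McCann–Nesheim: the supremum of the primal objective ∑_{x,z} μˢ x z · α x z + ∑_{z,y} μᵈ z y · γ z y over all feasible flows (μˢ, μᵈ) equals the supremum of ∑_{x,y} ν x y · Φ x y over all ν : X → Y → ℝ with ν ≥ 0, ∑_y ν x y ≤ n x for all x, and ∑_x ν x y ≤ m y for all y, where Φ x y = max_z (α x z + γ z y) is the indirect matching surplus. -/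
open Finset MeasureTheory Real

variable {X Y Z : Type*} [Fintype X] [Fintype Y] [Fintype Z]
  [Nonempty X] [Nonempty Y] [Nonempty Z]

lemma sum_rot3 {A B C : Type*} [Fintype A] [Fintype B] [Fintype C] (f : A → B → C → ℝ) :
    ∑ a, ∑ b, ∑ c, f a b c = ∑ c, ∑ b, ∑ a, f a b c := by
  calc ∑ a, ∑ b, ∑ c, f a b c
      = ∑ a, ∑ c, ∑ b, f a b c := Finset.sum_congr rfl fun a _ => Finset.sum_comm
    _ = ∑ c, ∑ a, ∑ b, f a b c := Finset.sum_comm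
    _ = ∑ c, ∑ b, ∑ a, f a b c := Finset.sum_congr rfl fun c _ => Finset.sum_comm

/-- Equivalence with the assignment game of Chiappori–McCann–Nesheim. -/
theorem hedonic_matching_equivalence (n : X → ℝ) (m : Y → ℝ)
    (hn : ∀ x, 0 ≤ n x) (hm : ∀ y, 0 ≤ m y) (α : X → Z → ℝ) (γ : Z → Y → ℝ) :
    sSup {s : ℝ | ∃ (μs : X → Z → ℝ) (μd : Z → Y → ℝ),
        FeasibleFlow n m μs μd ∧ s = primalObj α γ μs μd} =
      sSup {s : ℝ | ∃ ν : X → Y → ℝ, (∀ x y, 0 ≤ ν x y) ∧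
        (∀ x, ∑ y, ν x y ≤ n x) ∧ (∀ y, ∑ x, ν x y ≤ m y) ∧
        s = ∑ x, ∑ y, ν x y * univ.sup' univ_nonempty (fun z => α x z + γ z y)} := by
  classical
  set Φ : X → Y → ℝ := fun x y => univ.sup' univ_nonempty (fun z => α x z + γ z y) with hΦdef
  set A : Set ℝ := {s : ℝ | ∃ (μs : X → Z → ℝ) (μd : Z → Y → ℝ),
        FeasibleFlow n m μs μd ∧ s = primalObj α γ μs μd} with hAdef
  set B : Set ℝ := {s : ℝ | ∃ ν : X → Y → ℝ, (∀ x y, 0 ≤ ν x y) ∧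
        (∀ x, ∑ y, ν x y ≤ n x) ∧ (∀ y, ∑ x, ν x y ≤ m y) ∧
        s = ∑ x, ∑ y, ν x y * Φ x y} with hBdef
  have hΦle : ∀ x y z, α x z + γ z y ≤ Φ x y := fun x y z =>
    Finset.le_sup' (fun z => α x z + γ z y) (mem_univ z)
  -- nonemptiness
  have hA0 : (0:ℝ) ∈ A := by
    refine ⟨0, 0, ⟨?_, ?_, ?_, ?_, ?_⟩, ?_⟩ <;> simp [primalObj, hn, hm]
  have hB0 : (0:ℝ) ∈ B := by
    refine ⟨0, ?_, ?_, ?_, ?_⟩ <;> simp [hn, hm]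
  -- boundedness of A
  have hAbdd : BddAbove A := by
    refine ⟨(∑ x, ∑ z, n x * |α x z|) + ∑ z, ∑ y, m y * |γ z y|, ?_⟩
    rintro s ⟨μs, μd, ⟨h1, h2, h3, h4, h5⟩, rfl⟩
    unfold primalObj
    refine add_le_add (Finset.sum_le_sum fun x _ => Finset.sum_le_sum fun z _ => ?_)
      (Finset.sum_le_sum fun z _ => Finset.sum_le_sum fun y _ => ?_)
    · calc μs x z * α x z ≤ μs x z * |α x z| :=
            mul_le_mul_of_nonneg_left (le_abs_self _) (h1 x z)
        _ ≤ n x * |α x z| := by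
            refine mul_le_mul_of_nonneg_right ?_ (abs_nonneg _)
            calc μs x z ≤ ∑ z', μs x z' :=
                  Finset.single_le_sum (fun i _ => h1 x i) (mem_univ z)
              _ ≤ n x := h3 x
    · calc μd z y * γ z y ≤ μd z y * |γ z y| :=
            mul_le_mul_of_nonneg_left (le_abs_self _) (h2 z y)
        _ ≤ m y * |γ z y| := by
            refine mul_le_mul_of_nonneg_right ?_ (abs_nonneg _)
            calc μd z y ≤ ∑ z', μd z' y :=
                  Finset.single_le_sum (fun i _ => h2 i y) (mem_univ z)
              _ ≤ m y := h4 y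
  -- boundedness of B
  have hBbdd : BddAbove B := by
    refine ⟨∑ x, ∑ y, n x * |Φ x y|, ?_⟩
    rintro s ⟨ν, h1, h2, h3, rfl⟩
    refine Finset.sum_le_sum fun x _ => Finset.sum_le_sum fun y _ => ?_
    calc ν x y * Φ x y ≤ ν x y * |Φ x y| :=
          mul_le_mul_of_nonneg_left (le_abs_self _) (h1 x y)
      _ ≤ n x * |Φ x y| := by
          refine mul_le_mul_of_nonneg_right ?_ (abs_nonneg _)
          calc ν x y ≤ ∑ y', ν x y' :=
                Finset.single_le_sum (fun i _ => h1 x i) (mem_univ y)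
            _ ≤ n x := h2 x
  apply le_antisymm
  · -- A ≤ B : given a flow, build a matching with at least the same value
    refine csSup_le ⟨0, hA0⟩ ?_
    rintro s ⟨μs, μd, ⟨h1, h2, h3, h4, h5⟩, rfl⟩
    set T : Z → ℝ := fun z => ∑ x, μs x z with hTdef
    have hT0s : ∀ z, T z = 0 → ∀ x, μs x z = 0 := by
      intro z hz x
      have := (Finset.sum_eq_zero_iff_of_nonneg (fun i _ => h1 i z)).mp hz
      exact this x (mem_univ x)
    have hT0d : ∀ z, T z = 0 → ∀ y, μd z y = 0 := by
      intro z hz y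
      have hz' : ∑ y, μd z y = 0 := by rw [← h5 z]; exact hz
      have := (Finset.sum_eq_zero_iff_of_nonneg (fun i _ => h2 z i)).mp hz'
      exact this y (mem_univ y)
    set ν : X → Y → ℝ := fun x y => ∑ z, μs x z * μd z y / T z with hνdef
    have hc0 : ∀ x y z, 0 ≤ μs x z * μd z y / T z := by
      intro x y z
      exact div_nonneg (mul_nonneg (h1 x z) (h2 z y))
        (Finset.sum_nonneg fun i _ => h1 i z)
    have hrow : ∀ x z, ∑ y, μs x z * μd z y / T z = μs x z := by
      intro x z
      rcases eq_or_ne (T z) 0 with hz | hz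
      · simp [hT0d z hz, hT0s z hz x]
      · rw [← Finset.sum_div, ← Finset.mul_sum, ← h5 z]
        exact mul_div_cancel_right₀ _ hz
    have hcol : ∀ z y, ∑ x, μs x z * μd z y / T z = μd z y := by
      intro z y
      rcases eq_or_ne (T z) 0 with hz | hz
      · simp [hT0s z hz, hT0d z hz y]
      · rw [← Finset.sum_div, ← Finset.sum_mul]
        rw [show (∑ x, μs x z) = T z from rfl]
        exact mul_div_cancel_left₀ _ hz
    have hmem : (∑ x, ∑ y, ν x y * Φ x y) ∈ B := by
      refine ⟨ν, fun x y => Finset.sum_nonneg fun z _ => hc0 x y z, ?_, ?_, rfl⟩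
      · intro x
        calc ∑ y, ν x y = ∑ y, ∑ z, μs x z * μd z y / T z := rfl
          _ = ∑ z, ∑ y, μs x z * μd z y / T z := Finset.sum_comm
          _ = ∑ z, μs x z := by simp_rw [hrow]
          _ ≤ n x := h3 x
      · intro y
        calc ∑ x, ν x y = ∑ x, ∑ z, μs x z * μd z y / T z := rfl
          _ = ∑ z, ∑ x, μs x z * μd z y / T z := Finset.sum_comm
          _ = ∑ z, μd z y := by simp_rw [hcol]
          _ ≤ m y := h4 y
    have hval : primalObj α γ μs μd ≤ ∑ x, ∑ y, ν x y * Φ x y := by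
      have key : ∀ x y, (∑ z, (μs x z * μd z y / T z) * (α x z + γ z y)) ≤ ν x y * Φ x y := by
        intro x y
        rw [hνdef]
        simp only
        rw [Finset.sum_mul]
        exact Finset.sum_le_sum fun z _ =>
          mul_le_mul_of_nonneg_left (hΦle x y z) (hc0 x y z)
      calc primalObj α γ μs μd
          = ∑ x, ∑ y, ∑ z, (μs x z * μd z y / T z) * (α x z + γ z y) := by
            unfold primalObj
            have e1 : ∀ x y z, (μs x z * μd z y / T z) * (α x z + γ z y)
                = (μs x z * μd z y / T z) * α x z + (μs x z * μd z y / T z) * γ z y := by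
              intro x y z; ring
            simp_rw [e1, Finset.sum_add_distrib]
            congr 1
            · calc ∑ x, ∑ z, μs x z * α x z
                  = ∑ x, ∑ z, (∑ y, μs x z * μd z y / T z) * α x z := by
                    simp_rw [hrow]
                _ = ∑ x, ∑ z, ∑ y, (μs x z * μd z y / T z) * α x z := by
                    simp_rw [Finset.sum_mul]
                _ = ∑ x, ∑ y, ∑ z, (μs x z * μd z y / T z) * α x z := by
                    exact Finset.sum_congr rfl fun x _ => Finset.sum_comm
            · calc ∑ z, ∑ y, μd z y * γ z y
                  = ∑ z, ∑ y, (∑ x, μs x z * μd z y / T z) * γ z y := by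
                    simp_rw [hcol]
                _ = ∑ z, ∑ y, ∑ x, (μs x z * μd z y / T z) * γ z y := by
                    simp_rw [Finset.sum_mul]
                _ = ∑ x, ∑ y, ∑ z, (μs x z * μd z y / T z) * γ z y :=
                    sum_rot3 (fun z y x => (μs x z * μd z y / T z) * γ z y)
        _ ≤ ∑ x, ∑ y, ν x y * Φ x y :=
            Finset.sum_le_sum fun x _ => Finset.sum_le_sum fun y _ => key x y
    exact hval.trans (le_csSup hBbdd hmem)
  · -- B ≤ A : given a matching, build a flow with the same value
    refine csSup_le ⟨0, hB0⟩ ?_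
    rintro s ⟨ν, h1, h2, h3, rfl⟩
    have hz : ∀ x y, ∃ z ∈ (univ : Finset Z), Φ x y = α x z + γ z y := fun x y =>
      Finset.exists_mem_eq_sup' univ_nonempty _
    choose zs _ hzeq using hz
    set μs : X → Z → ℝ := fun x z => ∑ y, if zs x y = z then ν x y else 0 with hμsdef
    set μd : Z → Y → ℝ := fun z y => ∑ x, if zs x y = z then ν x y else 0 with hμddef
    have hμsnn : ∀ x z, 0 ≤ μs x z := fun x z =>
      Finset.sum_nonneg fun y _ => by split_ifs; exacts [h1 x y, le_rfl]
    have hμdnn : ∀ z y, 0 ≤ μd z y := fun z y =>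
      Finset.sum_nonneg fun x _ => by split_ifs; exacts [h1 x y, le_rfl]
    have hμssum : ∀ x, ∑ z, μs x z = ∑ y, ν x y := by
      intro x
      rw [hμsdef]
      simp only
      rw [Finset.sum_comm]
      exact Finset.sum_congr rfl fun y _ => by simp
    have hμdsum : ∀ y, ∑ z, μd z y = ∑ x, ν x y := by
      intro y
      rw [hμddef]
      simp only
      rw [Finset.sum_comm]
      exact Finset.sum_congr rfl fun x _ => by simp
    have hclear : ∀ z, ∑ x, μs x z = ∑ y, μd z y := by
      intro z
      rw [hμsdef, hμddef]
      simp only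
      exact Finset.sum_comm
    have hmemA : primalObj α γ μs μd ∈ A := by
      exact ⟨μs, μd, ⟨hμsnn, hμdnn,
        fun x => (hμssum x).le.trans (h2 x),
        fun y => (hμdsum y).le.trans (h3 y), hclear⟩, rfl⟩
    have hval : (∑ x, ∑ y, ν x y * Φ x y) = primalObj α γ μs μd := by
      unfold primalObj
      have e1 : ∑ x, ∑ z, μs x z * α x z = ∑ x, ∑ y, ν x y * α x (zs x y) := by
        refine Finset.sum_congr rfl fun x _ => ?_
        rw [hμsdef]
        simp only
        calc ∑ z, (∑ y, if zs x y = z then ν x y else 0) * α x z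
            = ∑ z, ∑ y, (if zs x y = z then ν x y * α x z else 0) := by
              refine Finset.sum_congr rfl fun z _ => ?_
              rw [Finset.sum_mul]
              exact Finset.sum_congr rfl fun y _ => by
                split <;> simp
          _ = ∑ y, ∑ z, (if zs x y = z then ν x y * α x z else 0) := Finset.sum_comm
          _ = ∑ y, ν x y * α x (zs x y) := by
              refine Finset.sum_congr rfl fun y _ => ?_
              simp
      have e2 : ∑ z, ∑ y, μd z y * γ z y = ∑ x, ∑ y, ν x y * γ (zs x y) y := by
        calc ∑ z, ∑ y, μd z y * γ z y
            = ∑ z, ∑ y, ∑ x, (if zs x y = z then ν x y * γ z y else 0) := by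
              refine Finset.sum_congr rfl fun z _ => Finset.sum_congr rfl fun y _ => ?_
              rw [hμddef]
              simp only
              rw [Finset.sum_mul]
              exact Finset.sum_congr rfl fun x _ => by split <;> simp
          _ = ∑ x, ∑ y, ∑ z, (if zs x y = z then ν x y * γ z y else 0) :=
              sum_rot3 (fun z y x => if zs x y = z then ν x y * γ z y else 0)
          _ = ∑ x, ∑ y, ν x y * γ (zs x y) y := by
              refine Finset.sum_congr rfl fun x _ => Finset.sum_congr rfl fun y _ => ?_
              have : ∀ z, (if zs x y = z then ν x y * γ z y else 0)
                  = (if zs x y = z then ν x y * γ (zs x y) y else 0) := by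
                intro z; split
                · next h => rw [h]
                · rfl
              simp_rw [this]
              simp
      rw [e1, e2, ← Finset.sum_add_distrib]
      refine Finset.sum_congr rfl fun x _ => ?_
      rw [← Finset.sum_add_distrib]
      refine Finset.sum_congr rfl fun y _ => ?_
      rw [hzeq x y]; ring
    rw [hval]
    exact le_csSup hAbdd hmemA
end

section
/- Identification via conjugate duality (basis of Theorem 4): fix U : Z → ℝ. Assume each coordinate map (ε, ε₀) ↦ ε z and (ε, ε₀) ↦ ε₀ is P-integrable, and that at U ties occur with probability zero: P({(ε, ε₀) : U z + ε z = U z' + ε z'}) = 0 for all z ≠ z' and P({(ε, ε₀) : U z + ε z = ε₀}) = 0 for all z. Let μ z = P({(ε, ε₀) : U z + ε z > ε₀ and U z + ε z > U z' + ε z' for all z' ≠ z}) be the choice probabilities. Then U attains the supremum defining the Legendre–Fenchel conjugate of G at μ: for every U' : Z → ℝ, ∑_z μ z · U' z − G U' ≤ ∑_z μ z · U z − G U. -/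
open Finset MeasureTheory Real

variable {Z : Type*} [Fintype Z] [Nonempty Z]

/-- Basis of Theorem 4: under a no-tie condition at `U`, the vector `U` attains the supremum
defining the Legendre–Fenchel conjugate of the expected indirect utility `G` at the vector of
choice probabilities `μ` it generates. -/
theorem conjugate_supremum_attained
    (P : Measure ((Z → ℝ) × ℝ)) [IsProbabilityMeasure P]
    (hcoord : ∀ z, Integrable (fun ω : (Z → ℝ) × ℝ => ω.1 z) P)
    (hcoord0 : Integrable (fun ω : (Z → ℝ) × ℝ => ω.2) P)
    (G : (Z → ℝ) → ℝ)
    (hGint : ∀ V : Z → ℝ,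
      Integrable (fun ω : (Z → ℝ) × ℝ =>
        max (univ.sup' univ_nonempty fun z => V z + ω.1 z) ω.2) P)
    (hG : ∀ V : Z → ℝ,
      G V = ∫ ω, max (univ.sup' univ_nonempty fun z => V z + ω.1 z) ω.2 ∂P)
    (U : Z → ℝ)
    (hties : ∀ z z', z ≠ z' → P {ω | U z + ω.1 z = U z' + ω.1 z'} = 0)
    (hties0 : ∀ z, P {ω | U z + ω.1 z = ω.2} = 0)
    (μ : Z → ℝ)
    (hμ : ∀ z, μ z = (P {ω | ω.2 < U z + ω.1 z ∧
      ∀ z', z' ≠ z → U z' + ω.1 z' < U z + ω.1 z}).toReal) :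
    ∀ U' : Z → ℝ, ∑ z, μ z * U' z - G U' ≤ ∑ z, μ z * U z - G U := by
  intro U'
  classical
  set A : Z → Set ((Z → ℝ) × ℝ) := fun z => {ω | ω.2 < U z + ω.1 z ∧
      ∀ z', z' ≠ z → U z' + ω.1 z' < U z + ω.1 z} with hAdef
  have hcm : ∀ w : Z, Measurable (fun ω : (Z → ℝ) × ℝ => U w + ω.1 w) :=
    fun w => measurable_const.add ((measurable_pi_apply w).comp measurable_fst)
  have hmeas : ∀ z, MeasurableSet (A z) := by
    intro z
    have hrw : A z = {ω : (Z → ℝ) × ℝ | ω.2 < U z + ω.1 z} ∩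
        ⋂ z', {ω : (Z → ℝ) × ℝ | z' ≠ z → U z' + ω.1 z' < U z + ω.1 z} := by
      ext ω; simp [hAdef, Set.mem_iInter]
    rw [hrw]
    refine (measurableSet_lt measurable_snd (hcm z)).inter (MeasurableSet.iInter fun z' => ?_)
    by_cases hz : z' = z
    · simp [hz]
    · have : {ω : (Z → ℝ) × ℝ | z' ≠ z → U z' + ω.1 z' < U z + ω.1 z} =
        {ω : (Z → ℝ) × ℝ | U z' + ω.1 z' < U z + ω.1 z} := by ext ω; simp [hz]
      rw [this]; exact measurableSet_lt (hcm z') (hcm z)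
  have hindint : ∀ z : Z, Integrable ((A z).indicator (fun _ => U' z - U z)) P :=
    fun z => (integrable_indicator_iff (hmeas z)).2
      (integrableOn_const (measure_ne_top P _))
  have hint : Integrable (fun ω => ∑ z, (A z).indicator (fun _ => U' z - U z) ω) P :=
    integrable_finset_sum _ (fun z _ => hindint z)
  have hinth : ∫ ω, (∑ z, (A z).indicator (fun _ => U' z - U z) ω) ∂P
      = ∑ z, μ z * (U' z - U z) := by
    rw [integral_finset_sum _ (fun z _ => hindint z)]
    refine Finset.sum_congr rfl fun z _ => ?_
    rw [integral_indicator_const _ (hmeas z), hμ z]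
    simp [hAdef, smul_eq_mul, Measure.real]
  have hae1 : ∀ᵐ ω ∂P, ∀ z z', z ≠ z' → U z + ω.1 z ≠ U z' + ω.1 z' := by
    rw [ae_all_iff]; intro z; rw [ae_all_iff]; intro z'
    by_cases hz : z = z'
    · filter_upwards with ω h; exact absurd hz h
    · rw [ae_iff]
      simpa [hz] using hties z z' hz
  have hae0 : ∀ᵐ ω ∂P, ∀ z, U z + ω.1 z ≠ ω.2 := by
    rw [ae_all_iff]; intro z
    rw [ae_iff]
    simpa using hties0 z
  have hle : (fun ω => ∑ z, (A z).indicator (fun _ => U' z - U z) ω) ≤ᵐ[P]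
      fun ω => (max (univ.sup' univ_nonempty fun z => U' z + ω.1 z) ω.2) -
        (max (univ.sup' univ_nonempty fun z => U z + ω.1 z) ω.2) := by
    filter_upwards [hae1, hae0] with ω h1 h0
    obtain ⟨z₀, -, hz₀⟩ := Finset.exists_mem_eq_sup' (univ_nonempty (α := Z))
      (fun z => U z + ω.1 z)
    rcases (h0 z₀).lt_or_gt with hlt | hgt
    · -- outside option wins
      have hsum : ∑ z, (A z).indicator (fun _ => U' z - U z) ω = 0 := by
        refine Finset.sum_eq_zero fun z _ => Set.indicator_of_notMem ?_ _
        intro hmem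
        have hle' : U z + ω.1 z ≤ U z₀ + ω.1 z₀ := hz₀ ▸ Finset.le_sup' (fun z => U z + ω.1 z) (mem_univ z)
        exact absurd (hmem.1.trans_le hle') (lt_asymm hlt)
      have hg : max (univ.sup' univ_nonempty fun z => U z + ω.1 z) ω.2 = ω.2 :=
        max_eq_right (by rw [hz₀]; exact hlt.le)
      have hf : ω.2 ≤ max (univ.sup' univ_nonempty fun z => U' z + ω.1 z) ω.2 :=
        le_max_right _ _
      rw [hsum, hg]; linarith
    · -- z₀ wins strictly
      have hmem : ω ∈ A z₀ := by
        refine ⟨hgt, fun z' hz' => ?_⟩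
        have hle' : U z' + ω.1 z' ≤ U z₀ + ω.1 z₀ := hz₀ ▸ Finset.le_sup' (fun z => U z + ω.1 z) (mem_univ z')
        exact hle'.lt_of_ne (h1 z' z₀ hz')
      have hsum : ∑ z, (A z).indicator (fun _ => U' z - U z) ω = U' z₀ - U z₀ := by
        rw [Finset.sum_eq_single z₀]
        · exact Set.indicator_of_mem hmem _
        · intro z'' _ hne
          refine Set.indicator_of_notMem ?_ _
          intro hmem''
          exact absurd (hmem''.2 z₀ (fun h => hne h.symm)) (not_lt.2 (hmem.2 z'' hne).le)
        · exact fun h => absurd (mem_univ z₀) h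
      have hg : max (univ.sup' univ_nonempty fun z => U z + ω.1 z) ω.2 = U z₀ + ω.1 z₀ := by
        rw [hz₀] at *
        exact max_eq_left hgt.le
      have hf : U' z₀ + ω.1 z₀ ≤ max (univ.sup' univ_nonempty fun z => U' z + ω.1 z) ω.2 :=
        le_trans (Finset.le_sup' (fun z => U' z + ω.1 z) (mem_univ z₀)) (le_max_left _ _)
      rw [hsum, hg]; linarith
  have hmono := integral_mono_ae hint ((hGint U').sub (hGint U)) hle
  simp only [Pi.sub_apply] at hmono
  rw [hinth, integral_sub (hGint U') (hGint U)] at hmono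
  have hsplit : ∑ z, μ z * (U' z - U z) = ∑ z, μ z * U' z - ∑ z, μ z * U z := by
    rw [← Finset.sum_sub_distrib]
    exact Finset.sum_congr rfl fun z _ => by ring
  rw [hG U', hG U]
  rw [hsplit] at hmono
  linarith
end
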